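/- arXiv:2103.14144 — 9 statements merged into one kernel-verified Lean document; each statement's English description precedes it below -/
import Mathlib

section
/- Let X ⊆ ℝ, let g : X → ℝ be nonincreasing and L-Lipschitz with L > 0, let 0 ≤ α ≤ 1/(L + 1), and define f(x) = α·g(x) + (1 − α)·x. Then f is (1 − α)-Lipschitz on X. Moreover, if in addition α > 0 and f maps X into X, then f : X → X is a contraction, i.e. Lipschitz on X with constant 1 − α < 1. -/
/-- Lemma (contractive update rule): if `g` is nonincreasing and `L`-Lipschitz on `X`
with `L > 0`, and `0 ≤ α ≤ 1/(L+1)`, then the monotone mixture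
`f(x) = α·g(x) + (1-α)·x` is `(1-α)`-Lipschitz on `X`; moreover, if `α > 0` and `f`
maps `X` into itself, then `f : X → X` is a contraction with constant `1 - α < 1`. -/
theorem monotone_mixture_contraction
    (X : Set ℝ) (g : ℝ → ℝ) (L : ℝ) (hL : 0 < L)
    (hmono : AntitoneOn g X)
    (hlip : ∀ x ∈ X, ∀ y ∈ X, |g x - g y| ≤ L * |x - y|)
    (α : ℝ) (hα0 : 0 ≤ α) (hα1 : α ≤ 1 / (L + 1))
    (f : ℝ → ℝ) (hf : ∀ x, f x = α * g x + (1 - α) * x) :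
    (∀ x ∈ X, ∀ y ∈ X, |f x - f y| ≤ (1 - α) * |x - y|) ∧
    (0 < α → Set.MapsTo f X X →
      (1 - α < 1 ∧ ∀ x ∈ X, ∀ y ∈ X, |f x - f y| ≤ (1 - α) * |x - y|)) := by
  have hL1 : (0:ℝ) < L + 1 := by linarith
  have hαL : α * (L + 1) ≤ 1 := by
    have h := (le_div_iff₀ hL1).mp hα1
    linarith
  have hα1' : α ≤ 1 := by nlinarith
  -- key one-sided estimate
  have key : ∀ x ∈ X, ∀ y ∈ X, x ≤ y → |f x - f y| ≤ (1 - α) * |x - y| := by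
    intro x hx y hy hxy
    have hg : g y ≤ g x := hmono hx hy hxy
    have hgl : |g x - g y| ≤ L * |x - y| := hlip x hx y hy
    have habs : |x - y| = y - x := by rw [abs_sub_comm]; exact abs_of_nonneg (by linarith)
    rw [habs] at hgl ⊢
    have hgl' : g x - g y ≤ L * (y - x) := by
      have := le_abs_self (g x - g y); linarith
    rw [hf, hf, abs_le]
    constructor
    · nlinarith
    · nlinarith
  have main : ∀ x ∈ X, ∀ y ∈ X, |f x - f y| ≤ (1 - α) * |x - y| := by
    intro x hx y hy
    rcases le_total x y with h | h
    · exact key x hx y hy h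
    · rw [abs_sub_comm, abs_sub_comm x y]; exact key y hy x hx h
  refine ⟨main, fun hαpos _ => ⟨by linarith, main⟩⟩
end

section
/- Let ā > 0 and X = [0, ā], and let f : X → X satisfy: (i) f is strictly concave on X and Lipschitz continuous on X; (ii) f(x) ≥ 0 for all x ∈ X; (iii) there exists x̄ ∈ X such that f is strictly increasing on [0, x̄), f is strictly decreasing on [x̄, ā], and the restriction of f to [x̄, ā] is L-Lipschitz for some L < 1; (iv) there exists b ∈ X with b > 0 and f(b) < b. Then for every x₀ ∈ X, the sequence of iterates x₀, f(x₀), f(f(x₀)), … converges to a fixed point of f. -/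
open Set Filter

/-- Lemma (concave contraction): under Assumption 2, the fixed-point iteration of
`f : [0, abar] → [0, abar]` starting from any point of `[0, abar]` converges to a
fixed point of `f`. -/
theorem concave_contraction_iteration_converges
    (abar : ℝ) (habar : 0 < abar) (f : ℝ → ℝ)
    (hmaps : Set.MapsTo f (Set.Icc 0 abar) (Set.Icc 0 abar))
    -- (i) strictly concave and Lipschitz on X = [0, abar]
    (hconc : StrictConcaveOn ℝ (Set.Icc 0 abar) f)
    (K : ℝ) (hK : 0 ≤ K)
    (hlipX : ∀ x ∈ Set.Icc 0 abar, ∀ y ∈ Set.Icc 0 abar, |f x - f y| ≤ K * |x - y|)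
    -- (ii) nonnegativity on X
    (hnn : ∀ x ∈ Set.Icc 0 abar, 0 ≤ f x)
    -- (iii) increasing on [0, xbar), decreasing and L-Lipschitz (L < 1) on [xbar, abar]
    (xbar : ℝ) (hxbar : xbar ∈ Set.Icc 0 abar)
    (hinc : StrictMonoOn f (Set.Ico 0 xbar))
    (hdec : StrictAntiOn f (Set.Icc xbar abar))
    (L : ℝ) (hL0 : 0 ≤ L) (hL1 : L < 1)
    (hlipD : ∀ x ∈ Set.Icc xbar abar, ∀ y ∈ Set.Icc xbar abar, |f x - f y| ≤ L * |x - y|)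
    -- (iv) a positive b with f(b) < b
    (b : ℝ) (hb : b ∈ Set.Icc 0 abar) (hb0 : 0 < b) (hfb : f b < b)
    -- conclusion
    (x₀ : ℝ) (hx₀ : x₀ ∈ Set.Icc 0 abar) :
    ∃ z ∈ Set.Icc 0 abar, f z = z ∧
      Tendsto (fun k => f^[k] x₀) atTop (nhds z) := by
  have hK1 : (0:ℝ) < K + 1 := by linarith
  -- continuity
  have hcont : ContinuousOn f (Icc 0 abar) := by
    have : LipschitzOnWith (Real.toNNReal K) f (Icc 0 abar) := by
      rw [lipschitzOnWith_iff_dist_le_mul]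
      intro x hx y hy
      rw [Real.dist_eq, Real.dist_eq, Real.coe_toNNReal K hK]
      exact hlipX x hx y hy
    exact this.continuousOn
  have h0mem : (0:ℝ) ∈ Icc 0 abar := ⟨le_refl 0, habar.le⟩
  have hf0 : 0 ≤ f 0 := hnn 0 h0mem
  -- the largest fixed point candidate
  set S : Set ℝ := Icc 0 abar ∩ (fun x => f x - x) ⁻¹' (Ici 0) with hSdef
  have hSne : S.Nonempty := ⟨0, h0mem, by simpa using hf0⟩
  have hSclosed : IsClosed S :=
    ContinuousOn.preimage_isClosed_of_isClosed (hcont.sub continuousOn_id)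
      isClosed_Icc isClosed_Ici
  have hScompact : IsCompact S :=
    isCompact_Icc.of_isClosed_subset hSclosed inter_subset_left
  set z : ℝ := sSup S with hzdef
  have hzS : z ∈ S := hScompact.sSup_mem hSne
  have hz : z ∈ Icc 0 abar := hzS.1
  have hzle : z ≤ f z := by have := hzS.2; simp only [mem_preimage, mem_Ici] at this; linarith
  have hz0 : 0 ≤ z := hz.1
  have hza : z ≤ abar := hz.2
  have hub : ∀ x ∈ S, x ≤ z := fun x hx => le_csSup hScompact.bddAbove hx
  have hconcave := hconc.concaveOn
  -- (P1) above z, f x < x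
  have P1 : ∀ x ∈ Icc 0 abar, z < x → f x < x := by
    intro x hx hzx
    by_contra h
    push_neg at h
    have : x ∈ S := ⟨hx, by simp only [mem_preimage, mem_Ici]; linarith⟩
    exact absurd (hub x this) (not_le.mpr hzx)
  -- (P2) on [0, z], x ≤ f x
  have P2 : ∀ x, 0 ≤ x → x ≤ z → x ≤ f x := by
    intro x hx0 hxz
    rcases hxz.lt_or_eq with hlt | rfl
    · rcases hx0.lt_or_eq with hlt0 | rfl
      · have hzpos : 0 < z := hlt0.trans hlt
        have ha0 : 0 ≤ 1 - x / z := by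
          have : x / z < 1 := (div_lt_one hzpos).mpr hlt
          linarith
        have hb0' : 0 ≤ x / z := div_nonneg hx0 hzpos.le
        have hsum : (1 - x / z) + x / z = 1 := by ring
        have key := hconcave.2 h0mem hz ha0 hb0' hsum
        have hcomb : (1 - x / z) • (0:ℝ) + (x / z) • z = x := by
          field_simp
          simp only [smul_eq_mul, mul_zero, zero_add]
          exact div_mul_cancel₀ x hzpos.ne'
        rw [hcomb] at key
        have h1 : (x / z) * z = x := by field_simp
        have h2 : (0:ℝ) ≤ (1 - x / z) * f 0 := mul_nonneg ha0 hf0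
        simp only [smul_eq_mul] at key
        nlinarith [mul_le_mul_of_nonneg_left hzle hb0']
      · exact hf0
    · exact hzle
  -- b is above z
  have hbz : z < b := by
    by_contra h
    push_neg at h
    exact absurd hfb (not_lt.mpr (P2 b hb0.le h))
  -- z is a fixed point
  have hfz : f z = z := by
    by_contra hne
    have hlt : z < f z := hzle.lt_of_ne (Ne.symm hne)
    have hzb : Icc z b ⊆ Icc 0 abar := Icc_subset_Icc hz0 hb.2
    have hgc : ContinuousOn (fun x => f x - x) (Icc z b) := (hcont.mono hzb).sub continuousOn_id
    have hmem0 : (0:ℝ) ∈ Icc (f b - b) (f z - z) := ⟨by linarith, by linarith⟩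
    obtain ⟨c, hc, hc0⟩ := intermediate_value_Icc' hbz.le hgc hmem0
    have hc0' : f c - c = 0 := hc0
    have hcz : c ≤ z := hub c ⟨hzb hc, by simp only [mem_preimage, mem_Ici]; linarith⟩
    have : c = z := le_antisymm hcz hc.1
    rw [this] at hc0'
    linarith
  -- (M) f x ≤ f xbar for x ∈ [0, xbar)
  have hM : ∀ x ∈ Ico (0:ℝ) xbar, f x ≤ f xbar := by
    intro x hx
    by_contra h
    push_neg at h
    set ε := f x - f xbar with hεdef
    have hε0 : 0 < ε := by simp only [hεdef]; linarith
    set y := max ((x + xbar)/2) (xbar - ε/(K+1)) with hydef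
    have hy1 : x < y := lt_max_of_lt_left (by linarith [hx.2])
    have hy2 : y < xbar := max_lt (by linarith [hx.2]) (by
      have : 0 < ε/(K+1) := div_pos hε0 hK1
      linarith)
    have hy0 : 0 ≤ y := le_trans (by linarith [hx.1, hx.2]) (le_max_left _ _)
    have hyIcc : y ∈ Icc 0 abar := ⟨hy0, le_trans hy2.le hxbar.2⟩
    have hxIcc : x ∈ Icc 0 abar := ⟨hx.1, le_trans hx.2.le hxbar.2⟩
    have hmono : f x < f y := hinc hx ⟨hy0, hy2⟩ hy1
    have hlip := hlipX y hyIcc xbar ⟨le_trans hx.1 hx.2.le, hxbar.2⟩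
    have habs : |y - xbar| = xbar - y := by
      rw [abs_of_nonpos (by linarith)]; ring
    rw [habs] at hlip
    have h1 : f y - f xbar ≤ K * (xbar - y) := le_trans (le_abs_self _) hlip
    have hyge : xbar - ε/(K+1) ≤ y := le_max_right _ _
    have h2 : K * (xbar - y) ≤ K * (ε/(K+1)) :=
      mul_le_mul_of_nonneg_left (by linarith) hK
    have h3 : K * (ε/(K+1)) < ε := by
      rw [mul_div_assoc']
      rw [div_lt_iff₀ hK1]
      nlinarith
    linarith
  -- (P3) below z: f x ≤ z + L (z - x)
  have P3 : ∀ x ∈ Icc 0 abar, x < z → f x ≤ z + L * (z - x) := by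
    intro x hx hxz
    have hLz : 0 ≤ L * (z - x) := mul_nonneg hL0 (by linarith)
    rcases lt_trichotomy z xbar with h1 | h1 | h1
    · -- x < z < xbar : monotone
      have := hinc ⟨hx.1, hxz.trans h1⟩ ⟨hz0, h1⟩ hxz
      rw [hfz] at this
      linarith
    · -- z = xbar
      have := hM x ⟨hx.1, h1 ▸ hxz⟩
      rw [← h1, hfz] at this
      linarith
    · by_cases hxx : xbar ≤ x
      · -- x, z ∈ [xbar, abar]
        have hlip := hlipD x ⟨hxx, hx.2⟩ z ⟨h1.le, hza⟩
        rw [hfz] at hlip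
        have habs : |x - z| = z - x := by rw [abs_of_nonpos (by linarith)]; ring
        rw [habs] at hlip
        have := le_trans (le_abs_self _) hlip
        linarith
      · -- x < xbar < z: concavity
        push_neg at hxx
        set D := z - x with hDdef
        have hD0 : 0 < D := by simp only [hDdef]; linarith
        set ta := (z - xbar)/D with htadef
        set tb := (xbar - x)/D with htbdef
        have hta0 : 0 ≤ ta := div_nonneg (by linarith) hD0.le
        have htb0 : 0 ≤ tb := div_nonneg (by linarith) hD0.le
        have hsum : ta + tb = 1 := by
          simp only [htadef, htbdef, hDdef]
          field_simp
          rw [div_eq_one_iff_eq (ne_of_gt (by linarith))]; ring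
        have key := hconcave.2 hx hz hta0 htb0 hsum
        have hcomb : ta • x + tb • z = xbar := by
          simp only [smul_eq_mul, htadef, htbdef, hDdef]
          field_simp
          ring_nf
          rw [← sub_mul, show z * xbar - xbar * x = xbar * (z - x) by ring, mul_assoc,
            mul_inv_cancel₀ (ne_of_gt (by linarith)), mul_one]
        rw [hcomb] at key
        simp only [smul_eq_mul, hfz] at key
        -- f xbar ≤ z + L (z - xbar)
        have hlip := hlipD xbar ⟨le_refl _, hxbar.2⟩ z ⟨h1.le, hza⟩
        rw [hfz] at hlip
        have habs : |xbar - z| = z - xbar := by rw [abs_of_nonpos (by linarith)]; ring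
        rw [habs] at hlip
        have hup : f xbar ≤ z + L * (z - xbar) := by
          have := le_trans (le_abs_self _) hlip
          linarith
        -- combine: ta * f x + tb * z ≤ z + L (z - xbar), with z - xbar = ta * D
        have hta' : z - xbar = ta * D := by
          simp only [htadef]; field_simp
        have hta0' : 0 < ta := by
          simp only [htadef]
          exact div_pos (by linarith) hD0
        -- ta * f x ≤ ta * z + L * ta * D
        have : ta * f x ≤ ta * (z + L * D) := by nlinarith
        exact le_of_mul_le_mul_left (by linarith) hta0'
  -- (P4) above z: f x ≥ z - L (x - z)
  have P4 : ∀ x ∈ Icc 0 abar, z < x → z - L * (x - z) ≤ f x := by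
    intro x hx hzx
    by_cases h1 : xbar ≤ z
    · have hlip := hlipD z ⟨h1, hza⟩ x ⟨h1.trans hzx.le, hx.2⟩
      rw [hfz] at hlip
      have habs : |z - x| = x - z := by rw [abs_of_nonpos (by linarith)]; ring
      rw [habs] at hlip
      have h2 : z - f x ≤ L * (x - z) := le_trans (le_abs_self _) hlip
      linarith
    · push_neg at h1
      by_cases h2 : x < xbar
      · -- z < x < xbar : monotone
        have := hinc ⟨hz0, h1⟩ ⟨hx.1, h2⟩ hzx
        rw [hfz] at this
        have : 0 ≤ L * (x - z) := mul_nonneg hL0 (by linarith)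
        linarith [hinc ⟨hz0, h1⟩ ⟨hx.1, h2⟩ hzx, hfz]
      · push_neg at h2
        have hclub : z ≤ f xbar := by
          have := hM z ⟨hz0, h1⟩
          rwa [hfz] at this
        have hlip := hlipD xbar ⟨le_refl _, hxbar.2⟩ x ⟨h2, hx.2⟩
        have habs : |xbar - x| = x - xbar := by rw [abs_of_nonpos (by linarith)]; ring
        rw [habs] at hlip
        have h3 : f xbar - f x ≤ L * (x - xbar) := le_trans (le_abs_self _) hlip
        have h4 : L * (x - xbar) ≤ L * (x - z) := mul_le_mul_of_nonneg_left (by linarith) hL0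
        linarith
  -- the iterates
  set x : ℕ → ℝ := fun k => f^[k] x₀ with hxdef
  have hxsucc : ∀ k, x (k+1) = f (x k) := fun k => Function.iterate_succ_apply' f k x₀
  have hmem : ∀ k, x k ∈ Icc 0 abar := by
    intro k
    induction k with
    | zero => exact hx₀
    | succ n ih => rw [hxsucc]; exact hmaps ih
  set e : ℕ → ℝ := fun k => |x k - z| with hedef
  have he0 : ∀ k, 0 ≤ e k := fun k => abs_nonneg _
  have heeq : ∀ k, e k = |x k - z| := fun k => rfl
  have hestep : ∀ k, e (k+1) ≤ e k := by
    intro k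
    rcases lt_trichotomy (x k) z with h | h | h
    · have hup := P3 (x k) (hmem k) h
      have hlow := P2 (x k) (hmem k).1 h.le
      have hek : e k = z - x k := by rw [heeq, abs_of_nonpos (by linarith)]; ring
      rw [heeq, hxsucc]
      rw [abs_le]
      constructor
      · rw [hek]; linarith
      · rw [hek]; nlinarith
    · have : x (k+1) = z := by rw [hxsucc, h, hfz]
      rw [heeq, this]
      simp [he0 k]
    · have hup := P1 (x k) (hmem k) h
      have hlow := P4 (x k) (hmem k) h
      have hek : e k = x k - z := by rw [heeq, abs_of_nonneg (by linarith)]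
      rw [heeq, hxsucc, abs_le]
      constructor
      · rw [hek]; nlinarith
      · rw [hek]; linarith
  have hanti : Antitone e := antitone_nat_of_succ_le hestep
  -- crossing contraction
  have hcu : ∀ k, x k < z → z ≤ x (k+1) → e (k+1) ≤ L * e k := by
    intro k h h'
    have hup := P3 (x k) (hmem k) h
    have hek : e k = z - x k := by rw [heeq, abs_of_nonpos (by linarith)]; ring
    rw [heeq, abs_of_nonneg (by linarith), hek]
    rw [hxsucc] at h' ⊢
    linarith
  have hcd : ∀ k, z < x k → x (k+1) ≤ z → e (k+1) ≤ L * e k := by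
    intro k h h'
    have hlow := P4 (x k) (hmem k) h
    have hek : e k = x k - z := by rw [heeq, abs_of_nonneg (by linarith)]
    rw [heeq, abs_of_nonpos (by rw [hxsucc] at h' ⊢; linarith), hek]
    rw [hxsucc] at h' ⊢
    linarith
  -- reduce the goal: it suffices to find a limit
  suffices hlim : ∃ w, Tendsto x atTop (nhds w) by
    obtain ⟨w, hxw⟩ := hlim
    have hwmem : w ∈ Icc 0 abar :=
      isClosed_Icc.mem_of_tendsto hxw (Eventually.of_forall hmem)
    have hfw : Tendsto (fun k => f (x k)) atTop (nhds (f w)) := by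
      have hc := (hcont w hwmem).tendsto
      exact hc.comp (tendsto_nhdsWithin_of_tendsto_nhds_of_eventually_within x hxw
        (Eventually.of_forall hmem))
    have hshift : Tendsto (fun k => x (k+1)) atTop (nhds w) :=
      (tendsto_add_atTop_iff_nat 1).mpr hxw
    have hshift' : Tendsto (fun k => x (k+1)) atTop (nhds (f w)) := by
      have : (fun k => x (k+1)) = fun k => f (x k) := funext hxsucc
      rw [this]; exact hfw
    exact ⟨w, hwmem, tendsto_nhds_unique hshift' hshift, hxw⟩
  -- limit of the errors
  have hebdd : BddBelow (range e) := ⟨0, by rintro _ ⟨k, rfl⟩; exact he0 k⟩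
  have hetend : Tendsto e atTop (nhds (⨅ k, e k)) := tendsto_atTop_ciInf hanti hebdd
  set ε := ⨅ k, e k with hεdef
  have hε0 : 0 ≤ ε := le_ciInf he0
  rcases hε0.lt_or_eq with hεpos | hεzero
  · -- positive infimum: eventually one-sided, monotone tail
    have hge : ∀ k, ε ≤ e k := fun k => ciInf_le hebdd k
    have hev : ∀ᶠ k in atTop, L * e k < ε := by
      have h1 : Tendsto (fun k => L * e k) atTop (nhds (L * ε)) := hetend.const_mul L
      exact h1.eventually_lt_const (by nlinarith)
    obtain ⟨N, hN⟩ := eventually_atTop.mp hev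
    have hxNz : x N ≠ z := by
      intro h
      have : e N = 0 := by rw [heeq, h]; simp
      linarith [hge N]
    rcases lt_or_gt_of_ne hxNz with hside | hside
    · -- stays below z
      have hbelow : ∀ k, N ≤ k → x k < z := by
        intro k hk
        induction k, hk using Nat.le_induction with
        | base => exact hside
        | succ n hn ih =>
          by_contra h'
          push_neg at h'
          have := hcu n ih h'
          have := hge (n+1)
          have := hN n hn
          linarith
      have hm : Monotone (fun k => x (k + N)) := monotone_nat_of_le_succ (by
        intro k
        have h1 := hbelow (k + N) (Nat.le_add_left N k)
        have : x (k + 1 + N) = f (x (k + N)) := by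
          rw [show k + 1 + N = (k + N) + 1 by ring, hxsucc]
        rw [this]
        exact P2 _ (hmem _).1 h1.le)
      have hbddA : BddAbove (range fun k => x (k + N)) :=
        ⟨abar, by rintro _ ⟨k, rfl⟩; exact (hmem _).2⟩
      have := tendsto_atTop_ciSup hm hbddA
      exact ⟨_, (tendsto_add_atTop_iff_nat N).mp this⟩
    · -- stays above z
      have habove : ∀ k, N ≤ k → z < x k := by
        intro k hk
        induction k, hk using Nat.le_induction with
        | base => exact hside
        | succ n hn ih =>
          by_contra h'
          push_neg at h'
          have := hcd n ih h'
          have := hge (n+1)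
          have := hN n hn
          linarith
      have hm : Antitone (fun k => x (k + N)) := antitone_nat_of_succ_le (by
        intro k
        have h1 := habove (k + N) (Nat.le_add_left N k)
        have h2 : x (k + 1 + N) = f (x (k + N)) := by
          rw [show k + 1 + N = (k + N) + 1 by ring, hxsucc]
        rw [h2]
        exact (P1 _ (hmem _) h1).le)
      have hbddB : BddBelow (range fun k => x (k + N)) :=
        ⟨0, by rintro _ ⟨k, rfl⟩; exact (hmem _).1⟩
      have := tendsto_atTop_ciInf hm hbddB
      exact ⟨_, (tendsto_add_atTop_iff_nat N).mp this⟩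
  · -- infimum zero: converge to z
    refine ⟨z, ?_⟩
    rw [tendsto_iff_dist_tendsto_zero]
    have : (fun k => dist (x k) z) = e := by
      funext k; rw [Real.dist_eq, heeq]
    rw [this, hεzero]
    exact hetend
end

section
/- Let ā > 0 and let f : [0, ∞) → [0, ∞) satisfy: (i) f is L-Lipschitz on [0, ∞); (ii) f is strictly concave on [0, ā]; (iii) f(x) = 0 for all x ≥ ā. Let 0 < α ≤ 1/(L + 1) and define g(x) = α·f(x) + (1 − α)·x. Then for every x₀ > 0, the sequence of iterates x₀, g(x₀), g(g(x₀)), … converges to a fixed point of f, i.e. to a point z with f(z) = z. -/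
open Set Filter

/-- Lemma (reduction): if `f : [0,∞) → [0,∞)` is `L`-Lipschitz, strictly concave on
`[0, abar]`, and vanishes on `[abar, ∞)`, then for `0 < α ≤ 1/(L+1)` the fixed-point
iteration of `g(x) = α·f(x) + (1-α)·x` starting from any positive `x₀` converges to a
fixed point of `f`. -/
theorem reduction_iteration_converges
    (abar : ℝ) (habar : 0 < abar) (f : ℝ → ℝ)
    (hnn : ∀ x, 0 ≤ x → 0 ≤ f x)
    (L : ℝ) (hL : 0 ≤ L)
    (hlip : ∀ x ∈ Set.Ici (0 : ℝ), ∀ y ∈ Set.Ici (0 : ℝ), |f x - f y| ≤ L * |x - y|)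
    (hconc : StrictConcaveOn ℝ (Set.Icc 0 abar) f)
    (hzero : ∀ x, abar ≤ x → f x = 0)
    (α : ℝ) (hα0 : 0 < α) (hα1 : α ≤ 1 / (L + 1))
    (g : ℝ → ℝ) (hg : ∀ x, g x = α * f x + (1 - α) * x)
    (x₀ : ℝ) (hx₀ : 0 < x₀) :
    ∃ z, f z = z ∧ Tendsto (fun k => g^[k] x₀) atTop (nhds z) := by
  have hL1 : (0:ℝ) < L + 1 := by linarith
  have hαL : α * (L + 1) ≤ 1 := (le_div_iff₀ hL1).mp hα1
  have hα1' : α ≤ 1 := by nlinarith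
  set x : ℕ → ℝ := fun k => g^[k] x₀ with hxdef
  have hxsucc : ∀ k, x (k + 1) = g (x k) := fun k =>
    Function.iterate_succ_apply' g k x₀
  have hx0 : x 0 = x₀ := rfl
  -- g nonneg on nonneg
  have hgnn : ∀ y, 0 ≤ y → 0 ≤ g y := by
    intro y hy
    have := hnn y hy
    rw [hg]
    nlinarith
  -- g monotone on nonneg
  have hgmono : ∀ a b, 0 ≤ a → a ≤ b → g a ≤ g b := by
    intro a b ha hab
    have hb : 0 ≤ b := ha.trans hab
    have h1 := hlip a (mem_Ici.2 ha) b (mem_Ici.2 hb)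
    rw [abs_of_nonpos (by linarith : a - b ≤ 0)] at h1
    have h2 : f a - f b ≤ L * (b - a) := by
      have := neg_abs_le (f a - f b)
      have := le_abs_self (f a - f b)
      nlinarith
    rw [hg, hg]
    nlinarith
  -- upper bound for f on [0, abar]
  have hfub : ∀ y, 0 ≤ y → y ≤ abar → f y ≤ L * (abar - y) := by
    intro y hy hyb
    have h1 := hlip y (mem_Ici.2 hy) abar (mem_Ici.2 habar.le)
    rw [hzero abar le_rfl, abs_of_nonpos (by linarith : y - abar ≤ 0)] at h1
    have := le_abs_self (f y - 0)
    nlinarith [le_abs_self (f y - 0)]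
  set M : ℝ := max x₀ abar with hMdef
  have hgM : ∀ y, 0 ≤ y → y ≤ M → g y ≤ M := by
    intro y hy hyM
    rcases le_or_gt y abar with hc | hc
    · have h1 := hfub y hy hc
      have h2 : α * f y ≤ α * (L * (abar - y)) :=
        mul_le_mul_of_nonneg_left h1 hα0.le
      have : g y ≤ abar := by rw [hg]; nlinarith
      exact this.trans (le_max_right _ _)
    · have : f y = 0 := hzero y hc.le
      rw [hg, this]
      nlinarith
  -- sequence stays in [0, M]
  have hxmem : ∀ k, 0 ≤ x k ∧ x k ≤ M := by
    intro k
    induction k with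
    | zero => exact ⟨hx₀.le, le_max_left _ _⟩
    | succ n ih =>
      rw [hxsucc]
      exact ⟨hgnn _ ih.1, hgM _ ih.1 ih.2⟩
  have hxnn : ∀ k, 0 ≤ x k := fun k => (hxmem k).1
  -- the sequence converges (monotone or antitone, bounded)
  have hconv : ∃ z, Tendsto x atTop (nhds z) := by
    rcases le_total (g x₀) x₀ with hcase | hcase
    · have hanti : ∀ k, x (k + 1) ≤ x k := by
        intro k
        induction k with
        | zero => rw [hxsucc, hx0]; exact hcase
        | succ n ih =>
          calc x (n+2) = g (x (n+1)) := hxsucc _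
            _ ≤ g (x n) := hgmono _ _ (hxnn _) ih
            _ = x (n+1) := (hxsucc n).symm
      exact ⟨_, tendsto_atTop_ciInf (antitone_nat_of_succ_le hanti)
        ⟨0, fun y ⟨k, hk⟩ => hk ▸ hxnn k⟩⟩
    · have hmono : ∀ k, x k ≤ x (k + 1) := by
        intro k
        induction k with
        | zero => rw [hxsucc, hx0]; exact hcase
        | succ n ih =>
          calc x (n+1) = g (x n) := hxsucc _
            _ ≤ g (x (n+1)) := hgmono _ _ (hxnn _) ih
            _ = x (n+2) := (hxsucc _).symm
      exact ⟨_, tendsto_atTop_ciSup (monotone_nat_of_le_succ hmono)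
        ⟨M, fun y ⟨k, hk⟩ => hk ▸ (hxmem k).2⟩⟩
  obtain ⟨z, hz⟩ := hconv
  have hz0 : 0 ≤ z := ge_of_tendsto' hz hxnn
  -- continuity of g on [0, ∞)
  have hfl : LipschitzOnWith ⟨L, hL⟩ f (Ici 0) := by
    apply LipschitzOnWith.of_dist_le_mul
    intro a ha b hb
    rw [Real.dist_eq, Real.dist_eq]
    exact hlip a ha b hb
  have hcont : ContinuousOn g (Ici 0) := by
    have hgeq : g = fun y => α * f y + (1 - α) * y := funext hg
    rw [hgeq]
    exact (continuousOn_const.mul hfl.continuousOn).add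
      (continuousOn_const.mul continuousOn_id)
  have htend : Tendsto (fun k => g (x k)) atTop (nhds (g z)) := by
    have hwz : ContinuousWithinAt g (Ici 0) z := hcont z (mem_Ici.2 hz0)
    exact hwz.tendsto.comp
      (tendsto_nhdsWithin_iff.2 ⟨hz, Filter.Eventually.of_forall hxnn⟩)
  have hshift : Tendsto (fun k => x (k + 1)) atTop (nhds z) :=
    hz.comp (tendsto_add_atTop_nat 1)
  have heq : (fun k => g (x k)) = fun k => x (k + 1) :=
    funext fun k => (hxsucc k).symm
  rw [heq] at htend
  have hgz : g z = z := tendsto_nhds_unique htend hshift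
  have hfz : f z = z := by
    rw [hg] at hgz
    have : α * f z = α * z := by linarith
    exact mul_left_cancel₀ (ne_of_gt hα0) this
  exact ⟨z, hfz, hz⟩
end

section
/- Assume the bidder values are μ-almost surely nonnegative and integrable, that OPT > 0, and that the revenue curve rev is L-Lipschitz on [0, ∞). Let 0 < α ≤ 1/(L/m + 1) and define the expected welfare-based price update E(q) = α·W(q)/m + (1 − α)·q. Then there is a unique equilibrium price q* > 0 such that for every starting price q₀ > 0 the iterates q₀, E(q₀), E(E(q₀)), … converge to q*; moreover q* satisfies W(q*) = m·q* and W(q*) ≥ OPT/2. -/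
open MeasureTheory Filter

/-- Number of bidders with value at least `q`. -/
noncomputable def demandCount (n : ℕ) (q : ℝ) (v : Fin n → ℝ) : ℕ :=
  (Finset.univ.filter fun i => q ≤ v i).card

/-- Demand curve with limited supply `m`: expected value of `min(m, N(q,v))`. -/
noncomputable def mde (n m : ℕ) (μ : Measure ℝ) (q : ℝ) : ℝ :=
  ∫ v, ((min m (demandCount n q v) : ℕ) : ℝ) ∂(Measure.pi fun _ : Fin n => μ)

/-- Revenue curve: `rev(q) = q · mde(q)`. -/
noncomputable def rev (n m : ℕ) (μ : Measure ℝ) (q : ℝ) : ℝ :=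
  q * mde n m μ q

/-- Welfare of the maximum-value allocation at price `q` for value profile `v`:
the largest sum `Σ_{i∈S} vᵢ·1{vᵢ ≥ q}` over subsets `S` of size at most `m`. -/
noncomputable def maxWelfare (n m : ℕ) (q : ℝ) (v : Fin n → ℝ) : ℝ :=
  ((Finset.univ : Finset (Fin n)).powerset.filter fun S => S.card ≤ m).sup'
    ⟨∅, by simp⟩ fun S => ∑ i ∈ S, if q ≤ v i then v i else 0

/-- Welfare curve: expected welfare of the maximum-value allocation at price `q`. -/
noncomputable def W (n m : ℕ) (μ : Measure ℝ) (q : ℝ) : ℝ :=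
  ∫ v, maxWelfare n m q v ∂(Measure.pi fun _ : Fin n => μ)

namespace WDPP

noncomputable def gaux (n m : ℕ) (q : ℝ) (v : Fin n → ℝ) : ℝ :=
  ((Finset.univ : Finset (Fin n)).powerset.filter fun S => S.card ≤ m).sup'
    ⟨∅, by simp⟩ fun S => ∑ i ∈ S, max (v i - q) 0

variable {n m : ℕ}

lemma mem_idx {S : Finset (Fin n)} :
    S ∈ ((Finset.univ : Finset (Fin n)).powerset.filter fun S => S.card ≤ m) ↔ S.card ≤ m := by
  simp

lemma maxWelfare_nonneg (q : ℝ) (v : Fin n → ℝ) : 0 ≤ maxWelfare n m q v := by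
  have := Finset.le_sup' (f := fun S => ∑ i ∈ S, if q ≤ v i then v i else 0)
    (b := (∅ : Finset (Fin n))) ((mem_idx (m := m)).2 (by simp))
  simpa [maxWelfare] using this

lemma gaux_nonneg (q : ℝ) (v : Fin n → ℝ) : 0 ≤ gaux n m q v := by
  have := Finset.le_sup' (f := fun S => ∑ i ∈ S, max (v i - q) 0)
    (b := (∅ : Finset (Fin n))) ((mem_idx (m := m)).2 (by simp))
  simpa [gaux] using this

lemma maxWelfare_le_sum_abs (q : ℝ) (v : Fin n → ℝ) :
    maxWelfare n m q v ≤ ∑ i, |v i| := by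
  refine Finset.sup'_le _ _ fun S hS => ?_
  calc ∑ i ∈ S, (if q ≤ v i then v i else 0) ≤ ∑ i ∈ S, |v i| := by
        refine Finset.sum_le_sum fun i _ => ?_
        split <;> simp [le_abs_self, abs_nonneg]
    _ ≤ ∑ i, |v i| :=
        Finset.sum_le_sum_of_subset_of_nonneg (Finset.subset_univ S)
          fun i _ _ => abs_nonneg _

lemma gaux_le_sum_abs {q : ℝ} (hq : 0 ≤ q) (v : Fin n → ℝ) :
    gaux n m q v ≤ ∑ i, |v i| := by
  refine Finset.sup'_le _ _ fun S hS => ?_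
  calc ∑ i ∈ S, max (v i - q) 0 ≤ ∑ i ∈ S, |v i| := by
        refine Finset.sum_le_sum fun i _ => ?_
        refine max_le (by linarith [le_abs_self (v i)]) (abs_nonneg _)
    _ ≤ ∑ i, |v i| :=
        Finset.sum_le_sum_of_subset_of_nonneg (Finset.subset_univ S)
          fun i _ _ => abs_nonneg _

end WDPP

namespace WDPP2
open WDPP

variable {n m : ℕ} {q q' : ℝ} {v : Fin n → ℝ}

lemma le_gaux {S : Finset (Fin n)} (hS : S.card ≤ m) :
    (∑ i ∈ S, max (v i - q) 0) ≤ gaux n m q v :=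
  Finset.le_sup' (fun S => ∑ i ∈ S, max (v i - q) 0) (mem_idx.2 hS)

lemma gaux_le {x : ℝ}
    (h : ∀ S : Finset (Fin n), S.card ≤ m → (∑ i ∈ S, max (v i - q) 0) ≤ x) :
    gaux n m q v ≤ x :=
  Finset.sup'_le _ _ fun S hS => h S (mem_idx.1 hS)

lemma le_maxWelfare {S : Finset (Fin n)} (hS : S.card ≤ m) :
    (∑ i ∈ S, if q ≤ v i then v i else 0) ≤ maxWelfare n m q v :=
  Finset.le_sup' (fun S => ∑ i ∈ S, if q ≤ v i then v i else 0) (mem_idx.2 hS)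

lemma maxWelfare_le {x : ℝ}
    (h : ∀ S : Finset (Fin n), S.card ≤ m → (∑ i ∈ S, if q ≤ v i then v i else 0) ≤ x) :
    maxWelfare n m q v ≤ x :=
  Finset.sup'_le _ _ fun S hS => h S (mem_idx.1 hS)

lemma sum_ite_eq_filter (q : ℝ) (v : Fin n → ℝ) (S : Finset (Fin n)) :
    (∑ i ∈ S, if q ≤ v i then v i else 0) = ∑ i ∈ S.filter (fun i => q ≤ v i), v i :=
  (Finset.sum_filter _ _).symm

lemma sum_split (q : ℝ) (v : Fin n → ℝ) (T : Finset (Fin n)) :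
    ∑ i ∈ T, v i = (∑ i ∈ T, (v i - q)) + T.card * q := by
  calc ∑ i ∈ T, v i = ∑ i ∈ T, ((v i - q) + q) := by simp
    _ = (∑ i ∈ T, (v i - q)) + T.card * q := by
        rw [Finset.sum_add_distrib, Finset.sum_const, nsmul_eq_mul]

lemma maxWelfare_eq_gaux (hq : 0 ≤ q) (v : Fin n → ℝ) :
    maxWelfare n m q v = q * ((min m (demandCount n q v) : ℕ) : ℝ) + gaux n m q v := by
  classical
  have hA : ∀ S : Finset (Fin n),
      (S.filter fun i => q ≤ v i).card ≤ demandCount n q v := fun S =>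
    Finset.card_le_card (Finset.filter_subset_filter _ (Finset.subset_univ S))
  apply le_antisymm
  · refine maxWelfare_le fun S hSm => ?_
    set T := S.filter (fun i => q ≤ v i) with hT
    have hTk : T.card ≤ min m (demandCount n q v) :=
      le_min ((Finset.card_filter_le _ _).trans hSm) (hA S)
    have h3 : (∑ i ∈ T, (v i - q)) ≤ gaux n m q v :=
      le_trans (Finset.sum_le_sum fun i _ => le_max_left _ _)
        (le_gaux ((Finset.card_filter_le _ _).trans hSm))
    have h4 : (T.card : ℝ) * q ≤ ((min m (demandCount n q v) : ℕ) : ℝ) * q :=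
      mul_le_mul_of_nonneg_right (Nat.cast_le.2 hTk) hq
    calc (∑ i ∈ S, if q ≤ v i then v i else 0) = ∑ i ∈ T, v i := sum_ite_eq_filter q v S
      _ = (∑ i ∈ T, (v i - q)) + T.card * q := sum_split q v T
      _ ≤ q * ((min m (demandCount n q v) : ℕ) : ℝ) + gaux n m q v := by
          rw [mul_comm]; linarith
  · obtain ⟨T₀, hT₀mem, hT₀⟩ :=
      Finset.exists_mem_eq_sup' (α := ℝ)
        (s := ((Finset.univ : Finset (Fin n)).powerset.filter fun S => S.card ≤ m))
        ⟨∅, by simp⟩ (fun S => ∑ i ∈ S, max (v i - q) 0)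
    have hT₀m : T₀.card ≤ m := mem_idx.1 hT₀mem
    set T₁ := T₀.filter (fun i => q ≤ v i) with hT₁def
    have hsum01 : (∑ i ∈ T₁, max (v i - q) 0) = ∑ i ∈ T₀, max (v i - q) 0 := by
      refine Finset.sum_filter_of_ne fun i _ hne => ?_
      by_contra hcon
      push_neg at hcon
      exact hne (max_eq_right (by linarith : v i - q ≤ 0))
    have hT₁A : T₁ ⊆ Finset.univ.filter (fun i => q ≤ v i) :=
      Finset.filter_subset_filter _ (Finset.subset_univ T₀)
    have hT₁k : T₁.card ≤ min m (demandCount n q v) :=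
      le_min ((Finset.card_filter_le _ _).trans hT₀m) (hA T₀)
    have hkA : min m (demandCount n q v) ≤ (Finset.univ.filter (fun i => q ≤ v i)).card :=
      min_le_right _ _
    obtain ⟨T, hT₁T, hTA, hTcard⟩ := Finset.exists_subsuperset_card_eq hT₁A hT₁k hkA
    have hTq : ∀ i ∈ T, q ≤ v i := fun i hi => (Finset.mem_filter.1 (hTA hi)).2
    have hstep : q * ((min m (demandCount n q v) : ℕ) : ℝ) + gaux n m q v
        ≤ ∑ i ∈ T, if q ≤ v i then v i else 0 := by
      have e1 : (∑ i ∈ T, if q ≤ v i then v i else 0) = ∑ i ∈ T, v i :=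
        Finset.sum_congr rfl fun i hi => if_pos (hTq i hi)
      have e2 : (∑ i ∈ T, (v i - q)) = ∑ i ∈ T, max (v i - q) 0 :=
        Finset.sum_congr rfl fun i hi => (max_eq_left (by linarith [hTq i hi])).symm
      have e3 : gaux n m q v ≤ ∑ i ∈ T, max (v i - q) 0 := by
        rw [gaux, hT₀, ← hsum01]
        exact Finset.sum_le_sum_of_subset_of_nonneg hT₁T fun i _ _ => le_max_right _ _
      have e4 : (T.card : ℝ) = ((min m (demandCount n q v) : ℕ) : ℝ) := Nat.cast_inj.2 hTcard
      rw [e1, sum_split q v T, e2, e4]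
      linarith
    exact hstep.trans (le_maxWelfare (hTcard ▸ min_le_left _ _))

lemma gaux_mono (h : q ≤ q') (v : Fin n → ℝ) :
    gaux n m q' v ≤ gaux n m q v := by
  refine Finset.sup'_le _ _ fun S hS => ?_
  refine le_trans (Finset.sum_le_sum fun i _ => ?_) (le_gaux (mem_idx.1 hS))
  exact max_le_max (by linarith) le_rfl

lemma gaux_lip (h : q ≤ q') (v : Fin n → ℝ) :
    gaux n m q v ≤ gaux n m q' v + m * (q' - q) := by
  refine gaux_le fun S hSm => ?_
  have h1 : ∑ i ∈ S, max (v i - q) 0 ≤ (∑ i ∈ S, max (v i - q') 0) + S.card * (q' - q) := by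
    calc ∑ i ∈ S, max (v i - q) 0 ≤ ∑ i ∈ S, (max (v i - q') 0 + (q' - q)) := by
          refine Finset.sum_le_sum fun i _ => ?_
          refine max_le (by linarith [le_max_left (v i - q') 0]) ?_
          linarith [le_max_right (v i - q') 0]
      _ = (∑ i ∈ S, max (v i - q') 0) + S.card * (q' - q) := by
          rw [Finset.sum_add_distrib, Finset.sum_const, nsmul_eq_mul]
  refine h1.trans (add_le_add (le_gaux hSm) ?_)
  have : (S.card : ℝ) ≤ m := Nat.cast_le.2 hSm
  nlinarith

lemma maxWelfare_mono (h : q ≤ q') (v : Fin n → ℝ) (hv : ∀ i, 0 ≤ v i) :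
    maxWelfare n m q' v ≤ maxWelfare n m q v := by
  refine Finset.sup'_le _ _ fun S hS => ?_
  refine le_trans (Finset.sum_le_sum fun i _ => ?_) (le_maxWelfare (mem_idx.1 hS))
  split_ifs with h1 h2 h2
  · exact le_rfl
  · exact absurd (le_trans h h1) h2
  · exact hv i
  · exact le_rfl

lemma maxWelfare_zero_le (hq : 0 ≤ q) (v : Fin n → ℝ) (hv : ∀ i, 0 ≤ v i) :
    maxWelfare n m 0 v ≤ maxWelfare n m q v + m * q := by
  refine maxWelfare_le fun S hSm => ?_
  have e1 : (∑ i ∈ S, if (0:ℝ) ≤ v i then v i else 0) = ∑ i ∈ S, v i :=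
    Finset.sum_congr rfl fun i _ => if_pos (hv i)
  have esplit : (∑ i ∈ S.filter (fun i => q ≤ v i), v i)
      + (∑ i ∈ S.filter (fun i => ¬ q ≤ v i), v i) = ∑ i ∈ S, v i :=
    Finset.sum_filter_add_sum_filter_not S _ v
  have e2 : (∑ i ∈ S.filter (fun i => q ≤ v i), v i) ≤ maxWelfare n m q v := by
    have h : (∑ i ∈ S.filter (fun i => q ≤ v i), v i)
        = ∑ i ∈ S.filter (fun i => q ≤ v i), if q ≤ v i then v i else 0 :=
      Finset.sum_congr rfl fun i hi => (if_pos (Finset.mem_filter.1 hi).2).symm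
    rw [h]
    exact le_maxWelfare ((Finset.card_filter_le _ _).trans hSm)
  have e3 : (∑ i ∈ S.filter (fun i => ¬ q ≤ v i), v i) ≤ m * q := by
    have hb : ∀ i ∈ S.filter (fun i => ¬ q ≤ v i), v i ≤ q := by
      intro i hi
      have := (Finset.mem_filter.1 hi).2
      linarith [lt_of_not_ge this]
    calc (∑ i ∈ S.filter (fun i => ¬ q ≤ v i), v i)
        ≤ (S.filter (fun i => ¬ q ≤ v i)).card • q := Finset.sum_le_card_nsmul _ _ _ hb
      _ = ((S.filter (fun i => ¬ q ≤ v i)).card : ℝ) * q := nsmul_eq_mul _ _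
      _ ≤ m * q := by
          refine mul_le_mul_of_nonneg_right ?_ hq
          exact_mod_cast (Finset.card_filter_le _ _).trans hSm
  rw [e1]
  linarith

end WDPP2


namespace WDPP3
open WDPP WDPP2
set_option linter.unusedSectionVars false

variable {n m : ℕ} {q q' : ℝ} {μ : Measure ℝ} [IsProbabilityMeasure μ]

lemma map_eval (i : Fin n) :
    (Measure.pi fun _ : Fin n => μ).map (fun v => v i) = μ := by
  ext s hs
  rw [Measure.map_apply (measurable_pi_apply i) hs]
  have hpre : (fun v : Fin n → ℝ => v i) ⁻¹' s
      = Set.pi Set.univ (Function.update (fun _ => Set.univ) i s) :=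
    by ext v; simp [Function.update, Set.mem_pi, eq_comm]
  rw [hpre]
  rw [Measure.pi_pi]
  rw [Finset.prod_eq_single i (fun j _ hj => by simp [Function.update_of_ne hj])
    (by simp)]
  simp

lemma integrable_eval_abs (hint : Integrable (id : ℝ → ℝ) μ) (i : Fin n) :
    Integrable (fun v : Fin n → ℝ => |v i|) (Measure.pi fun _ : Fin n => μ) := by
  have h1 : Integrable (fun x : ℝ => |x|) μ := hint.abs
  have h2 := (integrable_map_measure (μ := Measure.pi fun _ : Fin n => μ)
    (f := fun v : Fin n → ℝ => v i) (g := fun x : ℝ => |x|)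
    (by rw [map_eval]; exact h1.aestronglyMeasurable)
    (measurable_pi_apply i).aemeasurable)
  rw [map_eval] at h2
  exact h2.mp h1

lemma integrable_sum_abs (hint : Integrable (id : ℝ → ℝ) μ) :
    Integrable (fun v : Fin n → ℝ => ∑ i, |v i|) (Measure.pi fun _ : Fin n => μ) :=
  integrable_finset_sum _ fun i _ => integrable_eval_abs hint i

lemma measurable_maxWelfare : Measurable (maxWelfare n m q) := by
  have h : maxWelfare n m q =
      ((Finset.univ : Finset (Fin n)).powerset.filter fun S => S.card ≤ m).sup'
        ⟨∅, by simp⟩ (fun S (v : Fin n → ℝ) => ∑ i ∈ S, if q ≤ v i then v i else 0) := by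
    funext v
    exact (Finset.sup'_apply (C := fun _ => ℝ) _
      (fun S (v : Fin n → ℝ) => ∑ i ∈ S, if q ≤ v i then v i else 0) v).symm
  rw [h]
  refine Finset.measurable_sup' _ fun S _ => ?_
  exact Finset.measurable_sum _ fun i _ =>
    Measurable.ite (measurableSet_le measurable_const (measurable_pi_apply i))
      (measurable_pi_apply i) measurable_const

lemma measurable_gaux : Measurable (gaux n m q) := by
  have h : gaux n m q =
      ((Finset.univ : Finset (Fin n)).powerset.filter fun S => S.card ≤ m).sup'
        ⟨∅, by simp⟩ (fun S (v : Fin n → ℝ) => ∑ i ∈ S, max (v i - q) 0) := by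
    funext v
    exact (Finset.sup'_apply (C := fun _ => ℝ) _
      (fun S (v : Fin n → ℝ) => ∑ i ∈ S, max (v i - q) 0) v).symm
  rw [h]
  refine Finset.measurable_sup' _ fun S _ => ?_
  exact Finset.measurable_sum _ fun i _ =>
    ((measurable_pi_apply i).sub measurable_const).max measurable_const

lemma measurable_dmin :
    Measurable (fun v : Fin n → ℝ => ((min m (demandCount n q v) : ℕ) : ℝ)) := by
  have h1 : Measurable (demandCount n q) := by
    have h : demandCount n q = fun v : Fin n → ℝ => ∑ i : Fin n, if q ≤ v i then 1 else 0 := by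
      funext v
      rw [demandCount, Finset.card_filter]
    rw [h]
    exact Finset.measurable_sum _ fun i _ =>
      Measurable.ite (measurableSet_le measurable_const (measurable_pi_apply i))
        measurable_const measurable_const
  exact (measurable_from_top (f := fun k : ℕ => ((min m k : ℕ) : ℝ))).comp h1

lemma integrable_maxWelfare (hint : Integrable (id : ℝ → ℝ) μ) (q : ℝ) :
    Integrable (maxWelfare n m q) (Measure.pi fun _ : Fin n => μ) := by
  refine (integrable_sum_abs hint).mono' measurable_maxWelfare.aestronglyMeasurable
    (ae_of_all _ fun v => ?_)
  rw [Real.norm_eq_abs, abs_of_nonneg (maxWelfare_nonneg q v)]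
  exact maxWelfare_le_sum_abs q v

lemma integrable_gaux (hint : Integrable (id : ℝ → ℝ) μ) (hq : 0 ≤ q) :
    Integrable (gaux n m q) (Measure.pi fun _ : Fin n => μ) := by
  refine (integrable_sum_abs hint).mono' measurable_gaux.aestronglyMeasurable
    (ae_of_all _ fun v => ?_)
  rw [Real.norm_eq_abs, abs_of_nonneg (gaux_nonneg q v)]
  exact gaux_le_sum_abs hq v

lemma integrable_dmin :
    Integrable (fun v : Fin n → ℝ => ((min m (demandCount n q v) : ℕ) : ℝ))
      (Measure.pi fun _ : Fin n => μ) := by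
  refine (integrable_const (m : ℝ)).mono' measurable_dmin.aestronglyMeasurable
    (ae_of_all _ fun v => ?_)
  rw [Real.norm_eq_abs, abs_of_nonneg (by positivity)]
  exact_mod_cast min_le_left m (demandCount n q v)

lemma hv_ae (hpos : ∀ᵐ x ∂μ, 0 ≤ x) :
    ∀ᵐ v ∂(Measure.pi fun _ : Fin n => μ), ∀ i, 0 ≤ v i := by
  rw [MeasureTheory.ae_all_iff]
  intro i
  exact Measure.tendsto_eval_ae_ae.eventually hpos

lemma W_eq (hint : Integrable (id : ℝ → ℝ) μ) (hq : 0 ≤ q) :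
    W n m μ q = rev n m μ q + ∫ v, gaux n m q v ∂(Measure.pi fun _ : Fin n => μ) := by
  rw [W, rev, mde]
  rw [show (fun v : Fin n → ℝ => maxWelfare n m q v)
      = fun v => q * ((min m (demandCount n q v) : ℕ) : ℝ) + gaux n m q v from
    funext fun v => maxWelfare_eq_gaux hq v]
  rw [integral_add (integrable_dmin.const_mul q) (integrable_gaux hint hq),
    integral_const_mul]

lemma W_nonneg (q : ℝ) : 0 ≤ W n m μ q :=
  integral_nonneg fun v => maxWelfare_nonneg q v

lemma W_mono (hint : Integrable (id : ℝ → ℝ) μ) (hpos : ∀ᵐ x ∂μ, 0 ≤ x) (h : q ≤ q') :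
    W n m μ q' ≤ W n m μ q :=
  integral_mono_ae (integrable_maxWelfare hint q') (integrable_maxWelfare hint q)
    ((hv_ae hpos).mono fun v hv => maxWelfare_mono h v hv)

lemma U_mono (hint : Integrable (id : ℝ → ℝ) μ) (hq : 0 ≤ q) (h : q ≤ q') :
    ∫ v, gaux n m q' v ∂(Measure.pi fun _ : Fin n => μ)
      ≤ ∫ v, gaux n m q v ∂(Measure.pi fun _ : Fin n => μ) :=
  integral_mono (integrable_gaux hint (hq.trans h)) (integrable_gaux hint hq)
    fun v => gaux_mono h v

lemma U_lip (hint : Integrable (id : ℝ → ℝ) μ) (hq : 0 ≤ q) (h : q ≤ q') :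
    ∫ v, gaux n m q v ∂(Measure.pi fun _ : Fin n => μ)
      ≤ (∫ v, gaux n m q' v ∂(Measure.pi fun _ : Fin n => μ)) + m * (q' - q) := by
  have h1 : ∫ v, gaux n m q v ∂(Measure.pi fun _ : Fin n => μ)
      ≤ ∫ v, (gaux n m q' v + m * (q' - q)) ∂(Measure.pi fun _ : Fin n => μ) :=
    integral_mono (integrable_gaux hint hq)
      ((integrable_gaux hint (hq.trans h)).add (integrable_const _))
      fun v => gaux_lip h v
  rwa [integral_add (integrable_gaux hint (hq.trans h)) (integrable_const _),
    integral_const, probReal_univ, one_smul] at h1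

lemma W_zero_le (hint : Integrable (id : ℝ → ℝ) μ) (hpos : ∀ᵐ x ∂μ, 0 ≤ x) (hq : 0 ≤ q) :
    W n m μ 0 ≤ W n m μ q + m * q := by
  have h1 : W n m μ 0 ≤ ∫ v, (maxWelfare n m q v + m * q) ∂(Measure.pi fun _ : Fin n => μ) :=
    integral_mono_ae (integrable_maxWelfare hint 0)
      ((integrable_maxWelfare hint q).add (integrable_const _))
      ((hv_ae hpos).mono fun v hv => maxWelfare_zero_le hq v hv)
  rwa [integral_add (integrable_maxWelfare hint q) (integrable_const _),
    integral_const, probReal_univ, one_smul] at h1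

lemma W_zero_of_mde (hm : 1 ≤ m) (hmde : mde n m μ q = 0) : W n m μ q = 0 := by
  have h0 : ∀ᵐ v ∂(Measure.pi fun _ : Fin n => μ),
      ((min m (demandCount n q v) : ℕ) : ℝ) = 0 :=
    (integral_eq_zero_iff_of_nonneg (fun v => by positivity) integrable_dmin).mp hmde
  have h1 : ∀ᵐ v ∂(Measure.pi fun _ : Fin n => μ), maxWelfare n m q v = 0 := by
    refine h0.mono fun v hv => ?_
    have h2 : min m (demandCount n q v) = 0 := by exact_mod_cast hv
    have h3 : demandCount n q v = 0 := by
      rcases Nat.min_eq_zero_iff.1 h2 with h | h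
      · omega
      · exact h
    have h4 : ∀ i, ¬ q ≤ v i := by
      intro i hi
      have : i ∈ Finset.univ.filter fun i => q ≤ v i := Finset.mem_filter.2 ⟨Finset.mem_univ i, hi⟩
      rw [demandCount, Finset.card_eq_zero] at h3
      simp [h3] at this
    refine le_antisymm ?_ (maxWelfare_nonneg q v)
    refine Finset.sup'_le _ _ fun S _ => le_of_eq ?_
    exact Finset.sum_eq_zero fun i _ => if_neg (h4 i)
  rw [W, integral_eq_zero_of_ae h1]

end WDPP3


open WDPP3 in
/-- Theorem (WDPP stability and welfare): if the revenue curve is `L`-Lipschitz and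
`0 < α ≤ 1/(L/m + 1)`, the WDPP expected price update `E(q) = α·W(q)/m + (1-α)·q` has
a unique equilibrium price `q* > 0`, the iterates of `E` from any positive start
converge to `q*`, and `W(q*) = m·q*` with `W(q*) ≥ OPT/2` where `OPT = W(0)`. -/
theorem wdpp_stable_and_welfare
    (n m : ℕ) (hm : 1 ≤ m) (μ : Measure ℝ) [IsProbabilityMeasure μ]
    (hpos : ∀ᵐ x ∂μ, 0 ≤ x) (hint : Integrable (id : ℝ → ℝ) μ)
    (hOPT : 0 < W n m μ 0)
    (L : ℝ) (hL : 0 ≤ L)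
    (hlip : ∀ x ∈ Set.Ici (0 : ℝ), ∀ y ∈ Set.Ici (0 : ℝ),
      |rev n m μ x - rev n m μ y| ≤ L * |x - y|)
    (α : ℝ) (hα0 : 0 < α) (hα1 : α ≤ 1 / (L / m + 1))
    (E : ℝ → ℝ) (hE : ∀ q, E q = α * (W n m μ q / m) + (1 - α) * q) :
    ∃ qs : ℝ, 0 < qs ∧ W n m μ qs = m * qs ∧ W n m μ 0 / 2 ≤ W n m μ qs ∧
      (∀ q₀, 0 < q₀ → Tendsto (fun k => E^[k] q₀) atTop (nhds qs)) ∧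
      (∀ q', 0 < q' → W n m μ q' = m * q' → q' = qs) := by
  classical
  have hm0 : (0:ℝ) < m := by exact_mod_cast hm
  have hLm1 : (0:ℝ) < L / m + 1 := by positivity
  have hαLm : α * (L / m + 1) ≤ 1 := by
    rw [← le_div_iff₀ hLm1] at *
    exact hα1
  have hαm : α * (L / m) + α ≤ 1 := by nlinarith
  have hα_le1 : α ≤ 1 := by nlinarith [div_nonneg hL hm0.le]
  -- W is (L+m)-Lipschitz-from-above on [0,∞)
  have hWlip : ∀ a, 0 ≤ a → ∀ b, a ≤ b → W n m μ a - W n m μ b ≤ (L + m) * (b - a) := by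
    intro a ha b hab
    have hb : 0 ≤ b := ha.trans hab
    have h1 := W_eq (μ := μ) (n := n) (m := m) hint ha
    have h2 := W_eq (μ := μ) (n := n) (m := m) hint hb
    have h3 := U_lip (μ := μ) (n := n) (m := m) hint ha hab
    have h4 := hlip a (Set.mem_Ici.2 ha) b (Set.mem_Ici.2 hb)
    have h5 : |a - b| = b - a := by rw [abs_sub_comm]; exact abs_of_nonneg (by linarith)
    rw [h5] at h4
    have h6 : rev n m μ a - rev n m μ b ≤ L * (b - a) := (le_abs_self _).trans h4
    nlinarith
  -- α < 1
  have hαlt : α < 1 := by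
    rcases lt_or_eq_of_le hα_le1 with h | h
    · exact h
    · exfalso
      have hLm : L / m ≤ 0 := by nlinarith
      have hL0 : L = 0 := le_antisymm (by
        by_contra hc
        push_neg at hc
        exact absurd hLm (not_le.2 (div_pos hc hm0))) hL
      have hmde : ∀ p : ℝ, 0 < p → mde n m μ p = 0 := by
        intro p hp
        have h4 := hlip p (Set.mem_Ici.2 hp.le) 0 Set.self_mem_Ici
        rw [hL0] at h4
        simp only [zero_mul] at h4
        have h7 : rev n m μ 0 = 0 := by simp [rev]
        have h8 := abs_nonneg (rev n m μ p - rev n m μ 0)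
        have h9 : rev n m μ p - rev n m μ 0 = 0 :=
          abs_eq_zero.1 (le_antisymm h4 h8)
        have h10 : p * mde n m μ p = 0 := by
          have : rev n m μ p = p * mde n m μ p := rfl
          linarith
        exact (mul_eq_zero.1 h10).resolve_left hp.ne'
      have hWq : ∀ p : ℝ, 0 < p → W n m μ p = 0 := fun p hp =>
        W_zero_of_mde hm (hmde p hp)
      have hbound : ∀ p : ℝ, 0 < p → W n m μ 0 ≤ m * p := by
        intro p hp
        have := W_zero_le (μ := μ) (n := n) (m := m) hint hpos hp.le
        rw [hWq p hp] at this
        linarith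
      have h11 := hbound (W n m μ 0 / (2 * m)) (by positivity)
      have h12 : (m : ℝ) * (W n m μ 0 / (2 * m)) = W n m μ 0 / 2 := by
        field_simp
      rw [h12] at h11
      linarith
  -- contraction constant
  set c : ℝ := max (1 - α) (α * (L + m) / m - (1 - α)) with hc
  have hc0 : 0 ≤ c := le_max_of_le_left (by linarith)
  have hc1 : c < 1 := by
    apply max_lt (by linarith)
    have h2 : α * (L + m) / m = α * (L / m) + α := by field_simp
    rw [h2]
    linarith
  -- E is a c-contraction on [0,∞)
  have hEstep : ∀ a b : ℝ, 0 ≤ a → a ≤ b → |E b - E a| ≤ c * (b - a) := by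
    intro a b ha hab
    have hb : 0 ≤ b := ha.trans hab
    have hW1 : W n m μ b ≤ W n m μ a := W_mono hint hpos hab
    have hW2 : W n m μ a - W n m μ b ≤ (L + m) * (b - a) := hWlip a ha b hab
    have e : E b - E a = (α / m) * (W n m μ b - W n m μ a) + (1 - α) * (b - a) := by
      rw [hE a, hE b]; field_simp; ring
    have hαm0 : 0 < α / m := by positivity
    have hub : E b - E a ≤ c * (b - a) := by
      have h3 : (α / m) * (W n m μ b - W n m μ a) ≤ 0 :=
        mul_nonpos_of_nonneg_of_nonpos hαm0.le (by linarith)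
      have h4 : (1 - α) * (b - a) ≤ c * (b - a) :=
        mul_le_mul_of_nonneg_right (le_max_left _ _) (by linarith)
      linarith
    have hlb : -(c * (b - a)) ≤ E b - E a := by
      have h3 : -((α / m) * ((L + m) * (b - a))) ≤ (α / m) * (W n m μ b - W n m μ a) := by
        rw [neg_le]
        have := mul_le_mul_of_nonneg_left hW2 hαm0.le
        nlinarith
      have h4 : (α * (L + m) / m - (1 - α)) * (b - a) ≤ c * (b - a) :=
        mul_le_mul_of_nonneg_right (le_max_right _ _) (by linarith)
      have h5 : (α / m) * ((L + m) * (b - a)) = (α * (L + m) / m) * (b - a) := by ring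
      linarith
    rw [abs_le]
    exact ⟨hlb, hub⟩
  have hmaps : ∀ x : ℝ, 0 ≤ x → 0 ≤ E x := by
    intro x hx
    rw [hE]
    have hW := W_nonneg (n := n) (m := m) (μ := μ) (q := x)
    have h1 : 0 ≤ α * (W n m μ x / m) := by positivity
    nlinarith
  -- set up the contraction on the subtype
  haveI : CompleteSpace (Set.Ici (0:ℝ)) := (isClosed_Ici).completeSpace_coe
  haveI : Nonempty (Set.Ici (0:ℝ)) := ⟨⟨0, Set.self_mem_Ici⟩⟩
  set f : Set.Ici (0:ℝ) → Set.Ici (0:ℝ) := fun x => ⟨E x, hmaps x x.2⟩ with hfdef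
  have hlipf : LipschitzWith (Real.toNNReal c) f := by
    refine LipschitzWith.of_dist_le_mul fun x y => ?_
    simp only [Subtype.dist_eq, Real.coe_toNNReal c hc0, Real.dist_eq]
    show |E x - E y| ≤ c * |(x:ℝ) - y|
    rcases le_total (x:ℝ) y with h | h
    · rw [abs_sub_comm (E x) (E y), abs_sub_comm (x:ℝ) y, abs_of_nonneg (by linarith : (0:ℝ) ≤ (y:ℝ) - x)]
      exact hEstep x y x.2 h
    · rw [abs_of_nonneg (by linarith : (0:ℝ) ≤ (x:ℝ) - y)]
      exact hEstep y x y.2 h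
  have hcontr : ContractingWith (Real.toNNReal c) f := by
    refine ⟨?_, hlipf⟩
    have : Real.toNNReal c < Real.toNNReal 1 :=
      (Real.toNNReal_lt_toNNReal_iff_of_nonneg hc0).2 hc1
    simpa using this
  set x₀ : Set.Ici (0:ℝ) := ContractingWith.fixedPoint f hcontr with hx₀
  set qs : ℝ := (x₀ : ℝ) with hqs
  have hfix : E qs = qs := congrArg Subtype.val (hcontr.fixedPoint_isFixedPt)
  have hqs0 : 0 ≤ qs := x₀.2
  -- W qs = m qs
  have hWqs : W n m μ qs = m * qs := by
    rw [hE qs] at hfix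
    have h5 : α * (W n m μ qs / m) = α * qs := by linarith
    have h6 : W n m μ qs / m = qs := mul_left_cancel₀ hα0.ne' h5
    rw [div_eq_iff hm0.ne'] at h6
    rw [h6]
    ring
  -- qs > 0
  have hqspos : 0 < qs := by
    rcases hqs0.lt_or_eq with h | h
    · exact h
    · exfalso
      rw [← h, mul_zero] at hWqs
      linarith [hOPT]
  -- welfare guarantee
  have hwelf : W n m μ 0 / 2 ≤ W n m μ qs := by
    have := W_zero_le (μ := μ) (n := n) (m := m) hint hpos hqs0
    rw [← hWqs] at this
    linarith
  -- iterates
  have hiter : ∀ (k : ℕ) (x : Set.Ici (0:ℝ)), ((f^[k] x : Set.Ici (0:ℝ)) : ℝ) = E^[k] (x:ℝ) := by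
    intro k
    induction k with
    | zero => intro x; simp
    | succ k ih =>
        intro x
        rw [Function.iterate_succ_apply, Function.iterate_succ_apply]
        exact ih (f x)
  refine ⟨qs, hqspos, hWqs, hwelf, ?_, ?_⟩
  · intro q₀ hq₀
    have htend := hcontr.tendsto_iterate_fixedPoint (⟨q₀, hq₀.le⟩ : Set.Ici (0:ℝ))
    have htend2 : Tendsto (fun k => ((f^[k] ⟨q₀, hq₀.le⟩ : Set.Ici (0:ℝ)) : ℝ)) atTop (nhds qs) :=
      (continuous_subtype_val.tendsto x₀).comp htend
    have heq : (fun k => ((f^[k] ⟨q₀, hq₀.le⟩ : Set.Ici (0:ℝ)) : ℝ)) = fun k => E^[k] q₀ :=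
      funext fun k => hiter k _
    rwa [heq] at htend2
  · intro p hp hWp
    have hEp : E p = p := by
      rw [hE p, hWp]
      field_simp
      ring
    have hfp : Function.IsFixedPt f ⟨p, hp.le⟩ := by
      apply Subtype.ext
      exact hEp
    have := hcontr.fixedPoint_unique hfp
    exact congrArg Subtype.val this
end

section
/- Assume the bidder values are μ-almost surely nonnegative and integrable. If q ≥ 0 satisfies W(q) = m·q, then W(q) ≥ OPT/2. -/
open MeasureTheory Filter

lemma measurable_maxWelfare (n m : ℕ) (q : ℝ) :
    Measurable (maxWelfare n m q) := by
  have h : maxWelfare n m q =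
      ((Finset.univ : Finset (Fin n)).powerset.filter fun S => S.card ≤ m).sup'
        ⟨∅, by simp⟩ (fun S v => ∑ i ∈ S, if q ≤ v i then v i else 0) := by
    funext v; exact (Finset.sup'_apply (C := fun _ : Fin n → ℝ => ℝ) _
      (fun S (v : Fin n → ℝ) => ∑ i ∈ S, if q ≤ v i then v i else 0) v).symm
  rw [h]
  exact Finset.measurable_sup' _ fun S _ => Finset.measurable_sum S fun i _ => Measurable.ite
    (measurableSet_le measurable_const (measurable_pi_apply i))
    (measurable_pi_apply i) measurable_const

lemma measurePreserving_eval' (μ : Measure ℝ) [IsProbabilityMeasure μ] {n : ℕ} (i : Fin n) :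
    MeasurePreserving (Function.eval i) (Measure.pi fun _ : Fin n => μ) μ := by
  refine ⟨measurable_pi_apply i, ?_⟩
  ext s hs
  rw [Measure.map_apply (measurable_pi_apply i) hs, Set.eval_preimage, Measure.pi_pi]
  rw [Fintype.prod_eq_single i (fun j hj => by simp [Function.update_of_ne hj])]
  simp

lemma integrable_maxWelfare (n m : ℕ) (μ : Measure ℝ) [IsProbabilityMeasure μ]
    (hint : Integrable (id : ℝ → ℝ) μ) (q : ℝ) :
    Integrable (maxWelfare n m q) (Measure.pi fun _ : Fin n => μ) := by
  have hbound : Integrable (fun v : Fin n → ℝ => ∑ i, |v i|) (Measure.pi fun _ : Fin n => μ) := by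
    apply integrable_finset_sum
    intro i _
    exact ((measurePreserving_eval' μ i).integrable_comp hint.abs.aestronglyMeasurable).2
      hint.abs
  refine hbound.mono (measurable_maxWelfare n m q).aestronglyMeasurable ?_
  filter_upwards with v
  have h1 : maxWelfare n m q v ≤ ∑ i, |v i| := by
    apply Finset.sup'_le
    intro S hS
    calc ∑ i ∈ S, (if q ≤ v i then v i else 0) ≤ ∑ i ∈ S, |v i| := by
          apply Finset.sum_le_sum
          intro i _
          split <;> simp [le_abs_self, abs_nonneg]
      _ ≤ ∑ i, |v i| := Finset.sum_le_sum_of_subset_of_nonneg (Finset.subset_univ S)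
          (fun i _ _ => abs_nonneg _)
  have h2 : (0 : ℝ) ≤ maxWelfare n m q v := by
    have := Finset.le_sup' (f := fun S => ∑ i ∈ S, if q ≤ v i then v i else 0)
      (s := (Finset.univ : Finset (Fin n)).powerset.filter fun S => S.card ≤ m)
      (b := (∅ : Finset (Fin n))) (by simp)
    simpa [maxWelfare] using this
  rw [Real.norm_eq_abs, Real.norm_eq_abs, abs_of_nonneg h2,
    abs_of_nonneg (le_trans h2 h1)]
  exact h1

lemma maxWelfare_le (n m : ℕ) (q : ℝ) (hq : 0 ≤ q) (v : Fin n → ℝ) :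
    maxWelfare n m 0 v ≤ maxWelfare n m q v + m * q := by
  apply Finset.sup'_le
  intro S hS
  simp only [Finset.mem_filter, Finset.mem_powerset] at hS
  have key : ∑ i ∈ S, (if (0:ℝ) ≤ v i then v i else 0)
      ≤ (∑ i ∈ S, if q ≤ v i then v i else 0) + S.card * q := by
    calc ∑ i ∈ S, (if (0:ℝ) ≤ v i then v i else 0)
        ≤ ∑ i ∈ S, ((if q ≤ v i then v i else 0) + q) := by
          apply Finset.sum_le_sum
          intro i _
          by_cases h : q ≤ v i
          · simp only [if_pos h, if_pos (le_trans hq h)]; linarith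
          · push_neg at h
            simp only [if_neg (not_le.mpr h)]
            split <;> linarith
      _ = (∑ i ∈ S, if q ≤ v i then v i else 0) + S.card * q := by
          rw [Finset.sum_add_distrib, Finset.sum_const, nsmul_eq_mul]
  refine key.trans (add_le_add ?_ ?_)
  · exact Finset.le_sup' (f := fun S => ∑ i ∈ S, if q ≤ v i then v i else 0)
      (by simp [hS.2] : S ∈ (Finset.univ : Finset (Fin n)).powerset.filter fun S => S.card ≤ m)
  · exact mul_le_mul_of_nonneg_right (Nat.cast_le.mpr hS.2) hq

/-- If `q ≥ 0` is an equilibrium price of the WDPP mechanism, i.e. `W(q) = m·q`, then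
the welfare at `q` is at least half the optimal welfare `OPT = W(0)`. -/
theorem wdpp_equilibrium_welfare
    (n m : ℕ) (hm : 1 ≤ m) (μ : Measure ℝ) [IsProbabilityMeasure μ]
    (hpos : ∀ᵐ x ∂μ, 0 ≤ x) (hint : Integrable (id : ℝ → ℝ) μ)
    (q : ℝ) (hq : 0 ≤ q) (heq : W n m μ q = m * q) :
    W n m μ 0 / 2 ≤ W n m μ q := by
  have key : W n m μ 0 ≤ W n m μ q + m * q := by
    have h1 : W n m μ 0 ≤ ∫ v, (maxWelfare n m q v + m * q)
        ∂(Measure.pi fun _ : Fin n => μ) := by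
      apply integral_mono (integrable_maxWelfare n m μ hint 0)
        ((integrable_maxWelfare n m μ hint q).add (integrable_const _))
      exact maxWelfare_le n m q hq
    rw [integral_add (integrable_maxWelfare n m μ hint q) (integrable_const _),
      integral_const] at h1
    simpa [W] using h1
  rw [← heq] at key
  linarith
end

section
/- Let v > 0, α ∈ (0, 1), and δ > 0. Define h : ℝ → ℝ by h(q) = (1 + α·δ)·q if q ≤ v and h(q) = (1 − α)·q if q > v, and define w : ℝ → ℝ by w(q) = α·v + (1 − α)·q if q ≤ v and w(q) = (1 − α)·q if q > v. Then: (a) for every q₀ > 0, the sequence of iterates q₀, h(q₀), h(h(q₀)), … does not converge; (b) for every q₀ > 0, the sequence of iterates q₀, w(q₀), w(w(q₀)), … converges (its limit is v). -/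
open Filter

/-- Proposition (instability, concrete form): with one slot and two bidders of
deterministic value `v`, the UDPP expected price-update `h` never converges from any
positive start, while the WDPP expected price-update `w` always converges (to `v`). -/
theorem udpp_unstable_wdpp_stable_pointmass
    (v α δ : ℝ) (hv : 0 < v) (hα : α ∈ Set.Ioo (0 : ℝ) 1) (hδ : 0 < δ)
    (h w : ℝ → ℝ)
    (hh : ∀ q, h q = if q ≤ v then (1 + α * δ) * q else (1 - α) * q)
    (hw : ∀ q, w q = if q ≤ v then α * v + (1 - α) * q else (1 - α) * q) :
    (∀ q₀, 0 < q₀ → ¬ ∃ z, Tendsto (fun k => h^[k] q₀) atTop (nhds z)) ∧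
    (∀ q₀, 0 < q₀ → Tendsto (fun k => w^[k] q₀) atTop (nhds v)) := by
  obtain ⟨hα0, hα1⟩ := hα
  have h1α : 0 < 1 - α := by linarith
  have hαδ : 1 < 1 + α * δ := by nlinarith
  constructor
  · rintro q₀ hq₀ ⟨z, hz⟩
    have hpos : ∀ k, 0 < h^[k] q₀ := by
      intro k
      induction k with
      | zero => simpa
      | succ k ih =>
        rw [Function.iterate_succ_apply', hh]
        split
        · positivity
        · positivity
    rcases lt_trichotomy z v with hzv | hzv | hzv
    · -- limit below v : iterates eventually grow geometrically
      obtain ⟨N, hN⟩ := (hz.eventually_lt_const hzv).exists_forall_of_atTop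
      set a := h^[N] q₀ with ha
      have hform : ∀ j, h^[j + N] q₀ = (1 + α * δ) ^ j * a := by
        intro j
        induction j with
        | zero => simp [ha]
        | succ j ih =>
          have hlt : h^[j + N] q₀ < v := hN _ (by omega)
          rw [show j + 1 + N = (j + N) + 1 by omega, Function.iterate_succ_apply',
            hh, if_pos hlt.le, ih, pow_succ]
          ring
      have htop : Tendsto (fun j => (1 + α * δ) ^ j * a) atTop atTop :=
        (tendsto_pow_atTop_atTop_of_one_lt hαδ).atTop_mul_const (hpos N)
      have hz' : Tendsto (fun j => h^[j + N] q₀) atTop (nhds z) :=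
        (tendsto_add_atTop_iff_nat N).mpr hz
      have : Tendsto (fun j => h^[j + N] q₀) atTop atTop := by
        simpa only [hform] using htop
      exact not_tendsto_atTop_of_tendsto_nhds hz' this
    · -- limit equal to v : map repels a neighborhood of v
      have hε : (0:ℝ) < min (α * δ * v / (2 * (1 + α * δ))) (α * v / 2) := by
        apply lt_min <;> positivity
      have hc : (0:ℝ) < min (α * δ * v / 2) (α * v / 2) := by
        apply lt_min <;> positivity
      set ε := min (α * δ * v / (2 * (1 + α * δ))) (α * v / 2) with hεdef
      set c := min (α * δ * v / 2) (α * v / 2) with hcdef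
      obtain ⟨N, hN⟩ := (Metric.tendsto_atTop.mp hz) (min ε c) (lt_min hε hc)
      have hq1 := hN N le_rfl
      have hq2 := hN (N + 1) (by omega)
      rw [Real.dist_eq, hzv] at hq1 hq2
      set q := h^[N] q₀ with hq
      rw [Function.iterate_succ_apply', ← hq] at hq2
      have hq1' : |q - v| < ε := lt_of_lt_of_le hq1 (min_le_left _ _)
      have hq2' : |h q - v| < c := lt_of_lt_of_le hq2 (min_le_right _ _)
      have hεle1 : ε ≤ α * δ * v / (2 * (1 + α * δ)) := min_le_left _ _
      have hεle2 : ε ≤ α * v / 2 := min_le_right _ _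
      have hcle1 : c ≤ α * δ * v / 2 := min_le_left _ _
      have hcle2 : c ≤ α * v / 2 := min_le_right _ _
      rw [abs_lt] at hq1' hq2'
      rcases le_or_gt q v with hle | hlt
      · have hhq : h q = (1 + α * δ) * q := by rw [hh, if_pos hle]
        rw [hhq] at hq2'
        -- q ≥ v - ε, so (1+αδ)q - v ≥ αδv/2 ≥ c
        have h1 : (1 + α * δ) * ε ≤ α * δ * v / 2 := by
          have hpos1 : (0:ℝ) < 1 + α * δ := by linarith
          calc (1 + α * δ) * ε ≤ (1 + α * δ) * (α * δ * v / (2 * (1 + α * δ))) :=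
                mul_le_mul_of_nonneg_left hεle1 hpos1.le
            _ = α * δ * v / 2 := by field_simp
        nlinarith [hq1'.1, hq2'.2]
      · have hhq : h q = (1 - α) * q := by rw [hh, if_neg (not_le.mpr hlt)]
        rw [hhq] at hq2'
        nlinarith [hq1'.2, hq2'.1]
    · -- limit above v : iterates eventually decay geometrically to 0
      obtain ⟨N, hN⟩ := (hz.eventually_const_lt hzv).exists_forall_of_atTop
      set a := h^[N] q₀ with ha
      have hform : ∀ j, h^[j + N] q₀ = (1 - α) ^ j * a := by
        intro j
        induction j with
        | zero => simp [ha]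
        | succ j ih =>
          have hlt : v < h^[j + N] q₀ := hN _ (by omega)
          rw [show j + 1 + N = (j + N) + 1 by omega, Function.iterate_succ_apply',
            hh, if_neg (not_le.mpr hlt), ih, pow_succ]
          ring
      have h0 : Tendsto (fun j => (1 - α) ^ j * a) atTop (nhds 0) := by
        have := (tendsto_pow_atTop_nhds_zero_of_lt_one h1α.le (by linarith)).mul_const a
        simpa using this
      have hz' : Tendsto (fun j => h^[j + N] q₀) atTop (nhds z) :=
        (tendsto_add_atTop_iff_nat N).mpr hz
      have h0' : Tendsto (fun j => h^[j + N] q₀) atTop (nhds 0) := by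
        simpa only [hform] using h0
      have : z = 0 := tendsto_nhds_unique hz' h0'
      linarith
  · -- WDPP converges
    have key : ∀ q, q ≤ v → Tendsto (fun k => w^[k] q) atTop (nhds v) := by
      intro q hq
      have hform : ∀ k, w^[k] q = v + (1 - α) ^ k * (q - v) := by
        intro k
        induction k with
        | zero => simp
        | succ k ih =>
          have hle : w^[k] q ≤ v := by
            rw [ih]
            nlinarith [pow_nonneg h1α.le k]
          rw [Function.iterate_succ_apply', hw, if_pos hle, ih, pow_succ]
          ring
      have : Tendsto (fun k => v + (1 - α) ^ k * (q - v)) atTop (nhds (v + 0 * (q - v))) := by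
        exact tendsto_const_nhds.add
          ((tendsto_pow_atTop_nhds_zero_of_lt_one h1α.le (by linarith)).mul_const (q - v))
      simp only [zero_mul, add_zero] at this
      simpa only [hform] using this
    intro q₀ hq₀
    rcases le_or_gt q₀ v with hle | hlt
    · exact key q₀ hle
    · -- eventually some iterate drops to ≤ v
      have hex : ∃ k, w^[k] q₀ ≤ v := by
        by_contra hcon
        push_neg at hcon
        have hform : ∀ k, w^[k] q₀ = (1 - α) ^ k * q₀ := by
          intro k
          induction k with
          | zero => simp
          | succ k ih =>
            rw [Function.iterate_succ_apply', hw, if_neg (not_le.mpr (hcon k)), ih, pow_succ]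
            ring
        have h0 : Tendsto (fun k => w^[k] q₀) atTop (nhds 0) := by
          have := (tendsto_pow_atTop_nhds_zero_of_lt_one h1α.le (by linarith)).mul_const q₀
          simp only [zero_mul] at this
          simpa only [hform] using this
        obtain ⟨k, hk⟩ := (h0.eventually_lt_const hv).exists
        exact absurd (hcon k) (not_lt.mpr hk.le)
      obtain ⟨k₀, hk₀⟩ := hex
      have htail : Tendsto (fun k => w^[k + k₀] q₀) atTop (nhds v) := by
        have := key _ hk₀
        simpa only [← Function.iterate_add_apply] using this
      exact (tendsto_add_atTop_iff_nat k₀).mp htail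
end

section
/- Assume the bidder values lie in [0, ā] μ-almost surely, and suppose the revenue curve rev is L-Lipschitz on [0, ∞) and strictly concave on [0, ā]. Let δ > 0 and 0 < α ≤ 1/(L·(1 + δ)/m + 1), and define the expected utilization-based price update E(q) = α·(1 + δ)·rev(q)/m + (1 − α)·q. Then for every starting price q₀ > 0 the iterates q₀, E(q₀), E(E(q₀)), … converge to a point q* satisfying (1 + δ)·rev(q*)/m = q*; moreover the map q ↦ (1 + δ)·rev(q)/m has at most one positive fixed point, so the equilibrium price is unique. -/
open MeasureTheory Filter

lemma mde_nonneg (n m : ℕ) (μ : Measure ℝ) (q : ℝ) : 0 ≤ mde n m μ q :=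
  integral_nonneg fun v => by positivity

lemma mde_eq_zero (n m : ℕ) (μ : Measure ℝ) [IsProbabilityMeasure μ] (abar : ℝ)
    (hbdd : ∀ᵐ x ∂μ, x ∈ Set.Icc 0 abar) (q : ℝ) (hq : abar < q) : mde n m μ q = 0 := by
  set P := Measure.pi fun _ : Fin n => μ with hP
  have hSm : MeasurableSet (Set.pi Set.univ fun _ : Fin n => Set.Icc (0:ℝ) abar) :=
    MeasurableSet.univ_pi fun _ => measurableSet_Icc
  have hμ1 : μ (Set.Icc 0 abar) = 1 := by
    have h0 : μ {x | x ∉ Set.Icc (0:ℝ) abar} = 0 := ae_iff.mp hbdd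
    exact (prob_compl_eq_zero_iff measurableSet_Icc).mp h0
  have hS1 : P (Set.pi Set.univ fun _ : Fin n => Set.Icc (0:ℝ) abar) = 1 := by
    rw [hP, Measure.pi_pi]
    simp [hμ1]
  have hmem : ∀ᵐ v ∂P, v ∈ (Set.pi Set.univ fun _ : Fin n => Set.Icc (0:ℝ) abar) := by
    rw [ae_iff]
    exact (prob_compl_eq_zero_iff hSm).mpr hS1
  have hae : ∀ᵐ v ∂P, ((min m (demandCount n q v) : ℕ) : ℝ) = 0 := by
    filter_upwards [hmem] with v hv
    have hd : demandCount n q v = 0 := by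
      rw [demandCount, Finset.card_eq_zero, Finset.filter_eq_empty_iff]
      intro i _
      have h2 := (hv i (Set.mem_univ i)).2
      simp only [not_le]
      linarith
    simp [hd]
  exact integral_eq_zero_of_ae hae

/-- Theorem (UDPP stability): if bidder values are bounded by `abar`, the revenue
curve is `L`-Lipschitz on `[0,∞)` and strictly concave on `[0, abar]`, and
`0 < α ≤ 1/(L(1+δ)/m + 1)`, then the UDPP expected price update
`E(q) = α·(1+δ)·rev(q)/m + (1-α)·q` converges from every positive starting price to
an equilibrium price, and the equilibrium price is unique. -/
theorem udpp_stable
    (n m : ℕ) (hm : 1 ≤ m) (μ : Measure ℝ) [IsProbabilityMeasure μ]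
    (abar : ℝ) (habar : 0 < abar)
    (hbdd : ∀ᵐ x ∂μ, x ∈ Set.Icc 0 abar)
    (L : ℝ) (hL : 0 ≤ L)
    (hlip : ∀ x ∈ Set.Ici (0 : ℝ), ∀ y ∈ Set.Ici (0 : ℝ),
      |rev n m μ x - rev n m μ y| ≤ L * |x - y|)
    (hconc : StrictConcaveOn ℝ (Set.Icc 0 abar) (rev n m μ))
    (δ : ℝ) (hδ : 0 < δ)
    (α : ℝ) (hα0 : 0 < α) (hα1 : α ≤ 1 / (L * (1 + δ) / m + 1))
    (E : ℝ → ℝ)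
    (hE : ∀ q, E q = α * ((1 + δ) * rev n m μ q / m) + (1 - α) * q) :
    (∀ q₀, 0 < q₀ → ∃ qs, (1 + δ) * rev n m μ qs / m = qs ∧
        Tendsto (fun k => E^[k] q₀) atTop (nhds qs)) ∧
    (∀ x y : ℝ, 0 < x → 0 < y →
      (1 + δ) * rev n m μ x / m = x → (1 + δ) * rev n m μ y / m = y → x = y) := by
  have hm0 : (0:ℝ) < m := by exact_mod_cast hm
  set R := rev n m μ with hRdef
  have hR0 : R 0 = 0 := zero_mul _
  have hRnn : ∀ q, 0 ≤ q → 0 ≤ R q := fun q hq => mul_nonneg hq (mde_nonneg n m μ q)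
  have hRabar : ∀ q, abar < q → R q = 0 := by
    intro q hq
    rw [hRdef, rev, mde_eq_zero n m μ abar hbdd q hq, mul_zero]
  have hRub : ∀ q, 0 ≤ q → R q ≤ L * abar := by
    intro q hq
    rcases le_or_gt q abar with h | h
    · have hl := hlip q hq 0 Set.self_mem_Ici
      rw [hR0, sub_zero, sub_zero, abs_of_nonneg hq] at hl
      calc R q ≤ |R q| := le_abs_self _
        _ ≤ L * q := hl
        _ ≤ L * abar := by nlinarith
    · rw [hRabar q h]; positivity
  -- α bounds
  have hden : (0:ℝ) < L * (1 + δ) / m + 1 := by positivity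
  have hkey : α * (L * (1 + δ) / m) + α ≤ 1 := by
    have h2 : α * (L * (1 + δ) / m + 1) ≤ (1 / (L * (1 + δ) / m + 1)) * (L * (1 + δ) / m + 1) :=
      mul_le_mul_of_nonneg_right hα1 hden.le
    rw [one_div_mul_cancel hden.ne'] at h2
    nlinarith
  have hα1' : α ≤ 1 := by nlinarith [mul_nonneg hα0.le (div_nonneg (mul_nonneg hL (by linarith : (0:ℝ) ≤ 1 + δ)) hm0.le)]
  -- E properties
  have hEnn : ∀ q, 0 ≤ q → 0 ≤ E q := by
    intro q hq
    rw [hE]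
    have h1 : 0 ≤ (1 + δ) * R q / m := by
      have := hRnn q hq
      positivity
    nlinarith
  have hEmono : ∀ x, 0 ≤ x → ∀ y, 0 ≤ y → x ≤ y → E x ≤ E y := by
    intro x hx y hy hxy
    rw [hE, hE]
    have hl := hlip x hx y hy
    rw [abs_sub_comm x y, abs_of_nonneg (by linarith : (0:ℝ) ≤ y - x)] at hl
    have h2 : R x - R y ≤ L * (y - x) := (abs_le.mp hl).2.trans_eq' rfl |>.trans_eq rfl
    have h3 : α * ((1+δ)/m) * (R x - R y) ≤ α * ((1+δ)/m) * (L * (y - x)) :=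
      mul_le_mul_of_nonneg_left h2 (by positivity)
    have h4 : (α * (L * (1 + δ) / m)) * (y - x) ≤ (1 - α) * (y - x) :=
      mul_le_mul_of_nonneg_right (by linarith) (by linarith)
    have h5 : α * ((1 + δ) * R x / m) - α * ((1 + δ) * R y / m)
        = α * ((1+δ)/m) * (R x - R y) := by ring
    have h6 : α * ((1+δ)/m) * (L * (y - x)) = (α * (L * (1 + δ) / m)) * (y - x) := by ring
    linarith
  have hElip : ∀ x, 0 ≤ x → ∀ y, 0 ≤ y →
      |E x - E y| ≤ (α * (L * (1 + δ) / m) + (1 - α)) * |x - y| := by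
    intro x hx y hy
    rw [hE, hE]
    have hl := hlip x hx y hy
    have h1 : |α * ((1 + δ) * R x / m) - α * ((1 + δ) * R y / m)|
        = (α * ((1+δ)/m)) * |R x - R y| := by
      rw [← abs_of_nonneg (show (0:ℝ) ≤ α * ((1+δ)/m) by positivity), ← abs_mul]
      ring_nf
    calc |α * ((1 + δ) * R x / m) + (1 - α) * x - (α * ((1 + δ) * R y / m) + (1 - α) * y)|
        ≤ |α * ((1 + δ) * R x / m) - α * ((1 + δ) * R y / m)| + |(1 - α) * x - (1 - α) * y| := by
          have heq : α * ((1 + δ) * R x / m) + (1 - α) * x - (α * ((1 + δ) * R y / m) + (1 - α) * y)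
              = (α * ((1 + δ) * R x / m) - α * ((1 + δ) * R y / m)) + ((1 - α) * x - (1 - α) * y) := by
            ring
          rw [heq]
          exact abs_add_le _ _
      _ = (α * ((1+δ)/m)) * |R x - R y| + (1 - α) * |x - y| := by
          rw [h1, ← mul_sub, abs_mul, abs_of_nonneg (by linarith : (0:ℝ) ≤ 1 - α)]
      _ ≤ (α * ((1+δ)/m)) * (L * |x - y|) + (1 - α) * |x - y| := by
          have : (0:ℝ) ≤ α * ((1+δ)/m) := by positivity
          nlinarith
      _ = (α * (L * (1 + δ) / m) + (1 - α)) * |x - y| := by ring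
  have hKnn : 0 ≤ α * (L * (1 + δ) / m) + (1 - α) := by
    have : (0:ℝ) ≤ α * (L * (1 + δ) / m) := by positivity
    linarith
  -- upper bound for E
  have hEub : ∀ q, 0 ≤ q → E q ≤ α * ((1 + δ) * (L * abar) / m) + (1 - α) * q := by
    intro q hq
    rw [hE]
    have h1 : (1 + δ) * R q / m ≤ (1 + δ) * (L * abar) / m := by
      have := hRub q hq
      gcongr
    nlinarith
  -- fixed point from E-fixed point
  have hfixE : ∀ q, E q = q → (1 + δ) * R q / m = q := by
    intro q hq
    rw [hE] at hq
    have : α * ((1 + δ) * R q / m) = α * q := by linarith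
    exact mul_left_cancel₀ hα0.ne' this
  constructor
  · -- convergence
    intro q₀ hq₀
    set s : ℕ → ℝ := fun k => E^[k] q₀ with hs
    have hs0 : s 0 = q₀ := rfl
    have hssucc : ∀ k, s (k + 1) = E (s k) := fun k => Function.iterate_succ_apply' E k q₀
    have hsnn : ∀ k, 0 ≤ s k := by
      intro k
      induction k with
      | zero => exact hq₀.le
      | succ k ih => rw [hssucc]; exact hEnn _ ih
    -- limit extraction helper
    have hlim : ∀ qs : ℝ, 0 ≤ qs → Tendsto s atTop (nhds qs) →
        (1 + δ) * R qs / m = qs ∧ Tendsto (fun k => E^[k] q₀) atTop (nhds qs) := by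
      intro qs hqs hconv
      refine ⟨hfixE qs ?_, hconv⟩
      have h1 : Tendsto (fun k => s (k + 1)) atTop (nhds qs) :=
        hconv.comp (tendsto_add_atTop_nat 1)
      have h2 : Tendsto (fun k => E (s k)) atTop (nhds (E qs)) := by
        rw [tendsto_iff_dist_tendsto_zero]
        have hb : ∀ k, dist (E (s k)) (E qs) ≤ (α * (L * (1 + δ) / m) + (1 - α)) * dist (s k) qs := by
          intro k
          rw [Real.dist_eq, Real.dist_eq]
          exact hElip (s k) (hsnn k) qs hqs
        have hd0 : Tendsto (fun k => (α * (L * (1 + δ) / m) + (1 - α)) * dist (s k) qs) atTop (nhds 0) := by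
          have := (tendsto_iff_dist_tendsto_zero.mp hconv).const_mul (α * (L * (1 + δ) / m) + (1 - α))
          simpa using this
        exact squeeze_zero (fun k => dist_nonneg) hb hd0
      have : Tendsto (fun k => s (k + 1)) atTop (nhds (E qs)) := by
        simpa [hssucc] using h2
      exact tendsto_nhds_unique this h1
    rcases le_or_gt q₀ (E q₀) with hcase | hcase
    · -- increasing case
      set M : ℝ := max q₀ ((1 + δ) * (L * abar) / m) with hM
      have hBM : (1 + δ) * (L * abar) / m ≤ M := le_max_right _ _
      have hmain : ∀ k, s k ≤ s (k + 1) ∧ s k ≤ M := by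
        intro k
        induction k with
        | zero =>
          refine ⟨?_, le_max_left _ _⟩
          rw [hssucc, hs0]; exact hcase
        | succ k ih =>
          obtain ⟨ih1, ih2⟩ := ih
          constructor
          · simpa only [hssucc] using hEmono _ (hsnn k) _ (hsnn (k+1)) ih1
          · rw [hssucc]
            have := hEub (s k) (hsnn k)
            have h2 : (1 - α) * s k ≤ (1 - α) * M :=
              mul_le_mul_of_nonneg_left ih2 (by linarith)
            nlinarith
      have hmono : Monotone s := monotone_nat_of_le_succ fun k => (hmain k).1
      have hbdd' : BddAbove (Set.range s) := ⟨M, by rintro x ⟨k, rfl⟩; exact (hmain k).2⟩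
      have hconv : Tendsto s atTop (nhds (⨆ k, s k)) := tendsto_atTop_ciSup hmono hbdd'
      have hqs : 0 ≤ ⨆ k, s k := le_trans (hsnn 0) (le_ciSup hbdd' 0)
      exact ⟨_, hlim _ hqs hconv⟩
    · -- decreasing case
      have hmain : ∀ k, s (k + 1) ≤ s k := by
        intro k
        induction k with
        | zero => rw [hssucc, hs0]; exact hcase.le
        | succ k ih =>
          simpa only [hssucc] using hEmono _ (hsnn (k+1)) _ (hsnn k) ih
      have hanti : Antitone s := antitone_nat_of_succ_le hmain
      have hbdd' : BddBelow (Set.range s) := ⟨0, by rintro x ⟨k, rfl⟩; exact hsnn k⟩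
      have hconv : Tendsto s atTop (nhds (⨅ k, s k)) := tendsto_atTop_ciInf hanti hbdd'
      have hqs : 0 ≤ ⨅ k, s k := le_ciInf hsnn
      exact ⟨_, hlim _ hqs hconv⟩
  · -- uniqueness
    have key : ∀ a b : ℝ, 0 < a → 0 < b →
        (1 + δ) * R a / m = a → (1 + δ) * R b / m = b → a < b → False := by
      intro a b ha hb hfa hfb hab
      have hble : b ≤ abar := by
        by_contra hgt
        push_neg at hgt
        rw [hRabar b hgt] at hfb
        simp at hfb
        linarith
      have hale : a ≤ abar := le_trans hab.le hble
      set t : ℝ := a / b with ht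
      have ht0 : 0 < t := div_pos ha hb
      have ht1 : t < 1 := (div_lt_one hb).mpr hab
      have htb : t * b = a := div_mul_cancel₀ a hb.ne'
      have hcon := hconc.2 (Set.mem_Icc.mpr ⟨le_rfl, habar.le⟩)
        (Set.mem_Icc.mpr ⟨hb.le, hble⟩) (by linarith : (0:ℝ) ≠ b)
        (by linarith : 0 < 1 - t) ht0 (by ring)
      simp only [smul_eq_mul, mul_zero, zero_add, hR0] at hcon
      rw [htb] at hcon
      -- hcon : (1 - t) * 0 + t * R b < R a  (after simp)
      have hlt : t * R b < R a := by linarith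
      have h5 := mul_lt_mul_of_pos_left hlt (show (0:ℝ) < (1 + δ) / m by positivity)
      have h6 : (1 + δ) / ↑m * R a = (1 + δ) * R a / ↑m := by ring
      have h7 : (1 + δ) / ↑m * (t * R b) = t * ((1 + δ) * R b / ↑m) := by ring
      rw [h6, hfa, h7, hfb, htb] at h5
      exact lt_irrefl a h5
    intro x y hx hy hfx hfy
    rcases lt_trichotomy x y with h | h | h
    · exact absurd (key x y hx hy hfx hfy h) not_false
    · exact h
    · exact absurd (key y x hy hx hfy hfx h) not_false
end

section
/- There exist integers n, m with 1 ≤ n < m, a probability measure μ on [0, ∞), and parameters α ∈ (0, 1) and δ > 0 such that: for every starting price q₀ > 0 the iterates of the truncated welfare-based expected update E_ttw(q) = α·ktw_δ(q) + (1 − α)·q converge, but there exists a starting price q₀ > 0 for which the iterates of the utilization-based expected update E_tu(q) = α·(1 + δ)·rev(q)/m + (1 − α)·q do not converge. -/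
open MeasureTheory Filter

/-- Truncated welfare kernel of the TWDPP mechanism. -/
noncomputable def ktw (n m : ℕ) (δ : ℝ) (μ : Measure ℝ) (q : ℝ) : ℝ :=
  ∫ v, (if demandCount n q v < m then
          (1 / (m : ℝ)) * ∑ i ∈ Finset.univ.filter (fun i => q ≤ v i),
            min (v i) ((1 + δ) * q)
        else (1 + δ) * q) ∂(Measure.pi fun _ : Fin n => μ)


noncomputable def Fm : ℝ → ℝ := fun q => if q ≤ 1 then 1/4 * min 1 (6*q) + q/2 else q/2
noncomputable def Gm : ℝ → ℝ := fun q => if q ≤ 1 then 2*q else q/2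

lemma Fm_mid {q : ℝ} (h1 : 1/6 ≤ q) (h2 : q ≤ 1) : Fm q = 1/4 + q/2 := by
  have : (1:ℝ) ≤ 6*q := by linarith
  simp [Fm, h2, min_eq_left this]

lemma Fm_low {q : ℝ} (h : q < 1/6) : Fm q = 2*q := by
  have h2 : q ≤ 1 := by linarith
  have : 6*q ≤ 1 := by linarith
  rw [Fm]; simp only [h2, if_true, min_eq_right this]; ring

lemma Fm_high {q : ℝ} (h : 1 < q) : Fm q = q/2 := by
  simp [Fm, not_le.mpr h]

lemma Fm_inv {q : ℝ} (h : q ∈ Set.Icc (1/6:ℝ) 1) : Fm q ∈ Set.Icc (1/6:ℝ) 1 := by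
  rw [Fm_mid h.1 h.2]; constructor <;> [linarith [h.1]; linarith [h.2]]

lemma Fm_enter {q : ℝ} (hq : 0 < q) : ∃ K, Fm^[K] q ∈ Set.Icc (1/6:ℝ) 1 := by
  rcases lt_or_ge q (1/6) with hlow | h1
  · -- double up
    have hex : ∃ k, 1/6 ≤ 2^k * q := by
      obtain ⟨k, hk⟩ := pow_unbounded_of_one_lt (1/(6*q)) (one_lt_two (α := ℝ))
      refine ⟨k, ?_⟩
      have h6 : (0:ℝ) < 6*q := by linarith
      have := (div_lt_iff₀ h6).mp hk
      nlinarith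
    classical
    let k := Nat.find hex
    have hk : 1/6 ≤ 2^k * q := Nat.find_spec hex
    have hlt : ∀ j < k, 2^j * q < 1/6 := fun j hj => lt_of_not_ge (Nat.find_min hex hj)
    have key : ∀ j ≤ k, Fm^[j] q = 2^j * q := by
      intro j hj
      induction j with
      | zero => simp
      | succ i ih =>
        have hi : i < k := hj
        rw [Function.iterate_succ_apply', ih (le_of_lt hi), Fm_low (hlt i hi)]
        ring
    rcases Nat.eq_zero_or_pos k with hk0 | hk0
    · rw [hk0] at hk; simp at hk; linarith
    · refine ⟨k, ?_⟩
      rw [key k le_rfl]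
      refine ⟨hk, ?_⟩
      have := hlt (k-1) (Nat.sub_lt hk0 one_pos)
      have h2 : (2:ℝ)^k = 2 * 2^(k-1) := by
        rw [← pow_succ']
        congr 1
        omega
      rw [h2]; nlinarith
  · rcases le_or_gt q 1 with h2 | hhigh
    · exact ⟨0, by rw [Function.iterate_zero_apply]; exact ⟨h1, h2⟩⟩
    · have hex : ∃ k, q / 2^k ≤ 1 := by
        obtain ⟨k, hk⟩ := pow_unbounded_of_one_lt q (one_lt_two (α := ℝ))
        exact ⟨k, by rw [div_le_one (by positivity)]; linarith⟩
      classical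
      let k := Nat.find hex
      have hk : q / 2^k ≤ 1 := Nat.find_spec hex
      have hlt : ∀ j < k, 1 < q / 2^j := fun j hj => lt_of_not_ge (Nat.find_min hex hj)
      have key : ∀ j ≤ k, Fm^[j] q = q / 2^j := by
        intro j hj
        induction j with
        | zero => simp
        | succ i ih =>
          have hi : i < k := hj
          rw [Function.iterate_succ_apply', ih (le_of_lt hi), Fm_high (hlt i hi)]
          rw [div_div, ← pow_succ]
      have hk0 : 0 < k := by
        rcases Nat.eq_zero_or_pos k with h0 | h0
        · exact absurd (h0 ▸ hk) (by simpa using hhigh)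
        · exact h0
      refine ⟨k, ?_⟩
      rw [key k le_rfl]
      refine ⟨?_, hk⟩
      have := hlt (k-1) (Nat.sub_lt hk0 one_pos)
      have h2 : (2:ℝ)^k = 2 * 2^(k-1) := by
        rw [← pow_succ']; congr 1; omega
      have hp : (0:ℝ) < 2^(k-1) := by positivity
      rw [h2]
      rw [lt_div_iff₀ hp] at this
      rw [le_div_iff₀ (by positivity)]
      nlinarith

lemma Fm_conv {q₀ : ℝ} (hq : 0 < q₀) :
    Tendsto (fun k => Fm^[k] q₀) atTop (nhds (1/2)) := by
  obtain ⟨K, hK⟩ := Fm_enter hq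
  set y := Fm^[K] q₀ with hy
  have key : ∀ j, Fm^[j] y ∈ Set.Icc (1/6:ℝ) 1 ∧ |Fm^[j] y - 1/2| = |y - 1/2| * (1/2)^j := by
    intro j
    induction j with
    | zero => simpa using hK
    | succ i ih =>
      obtain ⟨hmem, heq⟩ := ih
      refine ⟨by rw [Function.iterate_succ_apply']; exact Fm_inv hmem, ?_⟩
      rw [Function.iterate_succ_apply', Fm_mid hmem.1 hmem.2]
      have : (1:ℝ)/4 + Fm^[i] y / 2 - 1/2 = (Fm^[i] y - 1/2)/2 := by ring
      rw [this, abs_div, heq]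
      rw [pow_succ]
      simp [abs_of_pos]
      ring
  have hdist : Tendsto (fun j => Fm^[j] y) atTop (nhds (1/2)) := by
    rw [tendsto_iff_dist_tendsto_zero]
    have h0 : Tendsto (fun j : ℕ => |y - 1/2| * (1/2:ℝ)^j) atTop (nhds 0) := by
      simpa using (tendsto_pow_atTop_nhds_zero_of_lt_one (by norm_num) (by norm_num : (1/2:ℝ) < 1)).const_mul |y - 1/2|
    refine h0.congr fun j => ?_
    rw [Real.dist_eq, (key j).2]
  rw [← tendsto_add_atTop_iff_nat K]
  refine hdist.congr fun j => ?_
  rw [hy, ← Function.iterate_add_apply, Nat.add_comm]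

lemma Gm_orbit : ∀ k, Gm^[2*k] 1 = 1 ∧ Gm^[2*k+1] 1 = 2 := by
  have h1 : Gm 1 = 2 := by norm_num [Gm]
  have h2 : Gm 2 = 1 := by norm_num [Gm]
  intro k
  induction k with
  | zero => simp [h1]
  | succ i ih =>
    have e : 2*(i+1) = (2*i+1)+1 := by ring
    constructor
    · rw [e, Function.iterate_succ_apply', ih.2, h2]
    · rw [show 2*(i+1)+1 = (2*i+1)+1+1 by ring, Function.iterate_succ_apply',
        Function.iterate_succ_apply', ih.2, h2, h1]

lemma Gm_not_conv : ¬ ∃ z : ℝ, Tendsto (fun k => Gm^[k] 1) atTop (nhds z) := by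
  rintro ⟨z, hz⟩
  have hm : Tendsto (fun k : ℕ => 2*k) atTop atTop :=
    tendsto_atTop_mono (fun k => by simp only [id]; omega) tendsto_id
  have hm' : Tendsto (fun k : ℕ => 2*k+1) atTop atTop :=
    tendsto_atTop_mono (fun k => by simp only [id]; omega) tendsto_id
  have he : Tendsto (fun k : ℕ => Gm^[2*k] 1) atTop (nhds z) := hz.comp hm
  have ho : Tendsto (fun k : ℕ => Gm^[2*k+1] 1) atTop (nhds z) := hz.comp hm'
  have he' : Tendsto (fun _ : ℕ => (1:ℝ)) atTop (nhds z) :=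
    he.congr fun k => (Gm_orbit k).1
  have ho' : Tendsto (fun _ : ℕ => (2:ℝ)) atTop (nhds z) :=
    ho.congr fun k => (Gm_orbit k).2
  have h1 : (1:ℝ) = z := tendsto_nhds_unique tendsto_const_nhds he'
  have h2 : (2:ℝ) = z := tendsto_nhds_unique tendsto_const_nhds ho'
  linarith

lemma pi_dirac_one :
    Measure.pi (fun _ : Fin 1 => Measure.dirac (1:ℝ)) = Measure.dirac (fun _ => (1:ℝ)) := by
  have h := measurePreserving_funUnique (Measure.dirac (1:ℝ)) (Fin 1)
  calc Measure.pi (fun _ : Fin 1 => Measure.dirac (1:ℝ))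
      = Measure.map (MeasurableEquiv.funUnique (Fin 1) ℝ).symm
          (Measure.map (MeasurableEquiv.funUnique (Fin 1) ℝ)
            (Measure.pi (fun _ : Fin 1 => Measure.dirac (1:ℝ)))) := by
        rw [(MeasurableEquiv.funUnique (Fin 1) ℝ).map_symm_map]
    _ = Measure.map (MeasurableEquiv.funUnique (Fin 1) ℝ).symm (Measure.dirac 1) := by
        erw [h.map_eq]
    _ = Measure.dirac (fun _ => (1:ℝ)) := by
        erw [Measure.map_dirac' (MeasurableEquiv.funUnique (Fin 1) ℝ).symm.measurable]
        rfl

lemma demandCount_one (q : ℝ) :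
    demandCount 1 q (fun _ => (1:ℝ)) = if q ≤ 1 then 1 else 0 := by
  rw [demandCount]
  by_cases h : q ≤ 1 <;> simp [h, Finset.filter_const]

lemma ktw_eq (q : ℝ) :
    ktw 1 2 5 (Measure.dirac 1) q = if q ≤ 1 then 1/2 * min 1 (6*q) else 0 := by
  rw [ktw, pi_dirac_one, integral_dirac]
  rw [show ((1:ℝ)+5) = 6 by norm_num]
  by_cases h : q ≤ 1
  · rw [if_pos h, if_pos (by rw [demandCount_one, if_pos h]; norm_num)]
    have : (Finset.univ.filter fun i : Fin 1 => q ≤ (1:ℝ)) = Finset.univ := by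
      simp [Finset.filter_const, h]
    rw [this]
    simp [min_comm]
  · rw [if_neg h, if_pos (by rw [demandCount_one, if_neg h]; norm_num)]
    have : (Finset.univ.filter fun i : Fin 1 => q ≤ (1:ℝ)) = ∅ := by
      simp [Finset.filter_const, h]
    rw [this]
    simp

lemma mde_eq (q : ℝ) :
    mde 1 2 (Measure.dirac 1) q = if q ≤ 1 then 1 else 0 := by
  rw [mde, pi_dirac_one, integral_dirac, demandCount_one]
  by_cases h : q ≤ 1 <;> simp [h]



/-- Proposition: there is a market with demand `n` smaller than supply `m` on which
the TWDPP expected price iteration converges from every positive starting price,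
while the UDPP expected price iteration fails to converge from some positive
starting price. -/
theorem twdpp_stable_udpp_unstable :
    ∃ (n m : ℕ) (μ : Measure ℝ) (α δ : ℝ),
      1 ≤ n ∧ n < m ∧ IsProbabilityMeasure μ ∧ (∀ᵐ x ∂μ, 0 ≤ x) ∧
      α ∈ Set.Ioo (0 : ℝ) 1 ∧ 0 < δ ∧
      (∀ q₀, 0 < q₀ → ∃ z : ℝ,
        Tendsto (fun k => (fun q => α * ktw n m δ μ q + (1 - α) * q)^[k] q₀)
          atTop (nhds z)) ∧
      (∃ q₀, 0 < q₀ ∧ ¬ ∃ z : ℝ,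
        Tendsto (fun k => (fun q => α * ((1 + δ) * rev n m μ q / m) + (1 - α) * q)^[k] q₀)
          atTop (nhds z)) := by
  refine ⟨1, 2, Measure.dirac 1, 1/2, 5, le_refl 1, one_lt_two, inferInstance, ?_, ?_, by norm_num, ?_, ?_⟩
  · rw [MeasureTheory.ae_dirac_iff (by exact measurableSet_Ici)]
    norm_num
  · constructor <;> norm_num
  · intro q₀ hq₀
    have hF : (fun q => 1/2 * ktw 1 2 5 (Measure.dirac 1) q + (1 - 1/2) * q) = Fm := by
      funext q
      rw [ktw_eq, Fm]
      by_cases h : q ≤ 1 <;> simp [h] <;> ring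
    exact ⟨1/2, hF ▸ Fm_conv hq₀⟩
  · refine ⟨1, one_pos, ?_⟩
    have hG : (fun q => 1/2 * ((1 + 5) * rev 1 2 (Measure.dirac 1) q / (2:ℕ)) + (1 - 1/2) * q) = Gm := by
      funext q
      rw [rev, mde_eq, Gm]
      by_cases h : q ≤ 1 <;> simp [h] <;> ring
    rw [hG]
    exact Gm_not_conv
end

section
/- Assume the bidder values lie in [0, ā] μ-almost surely, and suppose the truncated welfare kernel ktw_δ is L-Lipschitz on [0, ∞) and strictly concave on [0, ā]. Let 0 < α ≤ 1/(L + 1) and define the expected truncated welfare-based price update E(q) = α·ktw_δ(q) + (1 − α)·q. Then for every starting price q₀ > 0 the iterates q₀, E(q₀), E(E(q₀)), … converge to a point q* satisfying ktw_δ(q*) = q*. -/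
open MeasureTheory Filter

/-- Iteration of a monotone, continuous self-map of `[0, M]` converges to a fixed point. -/
lemma iterate_tendsto_fixed (E : ℝ → ℝ) (M : ℝ)
    (h0 : ∀ x, 0 ≤ x → 0 ≤ E x)
    (hM : ∀ x, 0 ≤ x → x ≤ M → E x ≤ M)
    (hmono : ∀ x y, 0 ≤ x → x ≤ y → E x ≤ E y)
    (hcont : ContinuousOn E (Set.Ici 0))
    (q₀ : ℝ) (hq0 : 0 ≤ q₀) (hqM : q₀ ≤ M) :
    ∃ qs, E qs = qs ∧ Tendsto (fun k => E^[k] q₀) atTop (nhds qs) := by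
  set a : ℕ → ℝ := fun k => E^[k] q₀ with ha
  have h00 : a 0 = q₀ := rfl
  have hsucc : ∀ k, a (k + 1) = E (a k) := fun k => Function.iterate_succ_apply' E k q₀
  have hnn : ∀ k, 0 ≤ a k := by
    intro k
    induction k with
    | zero => simpa [h00] using hq0
    | succ k ih => rw [hsucc]; exact h0 _ ih
  have hub : ∀ k, a k ≤ M := by
    intro k
    induction k with
    | zero => simpa [h00] using hqM
    | succ k ih => rw [hsucc]; exact hM _ (hnn k) ih
  have post : ∀ qs, Tendsto a atTop (nhds qs) →
      ∃ qs', E qs' = qs' ∧ Tendsto a atTop (nhds qs') := by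
    intro qs hta
    refine ⟨qs, ?_, hta⟩
    have hqs0 : (0 : ℝ) ≤ qs := ge_of_tendsto' hta hnn
    have h2 : Tendsto a atTop (nhdsWithin qs (Set.Ici 0)) :=
      tendsto_nhdsWithin_of_tendsto_nhds_of_eventually_within a hta
        (Filter.Eventually.of_forall hnn)
    have h3 : Tendsto (fun k => E (a k)) atTop (nhds (E qs)) :=
      Filter.Tendsto.comp (hcont qs hqs0) h2
    have h4 : Tendsto (fun k => a (k + 1)) atTop (nhds qs) :=
      hta.comp (Filter.tendsto_add_atTop_nat 1)
    have h5 : (fun k => a (k + 1)) = fun k => E (a k) := funext hsucc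
    rw [h5] at h4
    exact (tendsto_nhds_unique h4 h3).symm
  by_cases hcase : q₀ ≤ E q₀
  · have hstep : ∀ k, a k ≤ a (k + 1) := by
      intro k
      induction k with
      | zero => rw [hsucc, h00]; exact hcase
      | succ k ih =>
          have h := hmono _ _ (hnn k) ih
          rwa [← hsucc, ← hsucc] at h
    have hbdd : BddAbove (Set.range a) := ⟨M, by rintro x ⟨k, rfl⟩; exact hub k⟩
    exact post _ (tendsto_atTop_ciSup (monotone_nat_of_le_succ hstep) hbdd)
  · push_neg at hcase
    have hstep : ∀ k, a (k + 1) ≤ a k := by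
      intro k
      induction k with
      | zero => rw [hsucc, h00]; exact hcase.le
      | succ k ih =>
          have h := hmono _ _ (hnn (k + 1)) ih
          rwa [← hsucc, ← hsucc] at h
    have hbdd : BddBelow (Set.range a) := ⟨0, by rintro x ⟨k, rfl⟩; exact hnn k⟩
    exact post _ (tendsto_atTop_ciInf (antitone_nat_of_succ_le hstep) hbdd)

/-- Theorem (TWDPP stability): if bidder values are bounded by `abar` and the
truncated welfare kernel is `L`-Lipschitz and strictly concave on `[0, abar]`, then
for any `0 < α ≤ 1/(L+1)` the iterates of the expected price update
`E(q) = α·ktw(q) + (1-α)·q` from any positive start converge to a fixed point of the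
kernel. -/
theorem twdpp_stable
    (n m : ℕ) (hm : 1 ≤ m) (μ : Measure ℝ) [IsProbabilityMeasure μ]
    (abar : ℝ) (habar : 0 < abar)
    (hbdd : ∀ᵐ x ∂μ, x ∈ Set.Icc 0 abar)
    (δ : ℝ) (hδ : 0 < δ)
    (L : ℝ) (hL : 0 ≤ L)
    (hlip : ∀ x ∈ Set.Ici (0 : ℝ), ∀ y ∈ Set.Ici (0 : ℝ),
      |ktw n m δ μ x - ktw n m δ μ y| ≤ L * |x - y|)
    (hconc : StrictConcaveOn ℝ (Set.Icc 0 abar) (ktw n m δ μ))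
    (α : ℝ) (hα0 : 0 < α) (hα1 : α ≤ 1 / (L + 1))
    (E : ℝ → ℝ) (hE : ∀ q, E q = α * ktw n m δ μ q + (1 - α) * q) :
    ∀ q₀, 0 < q₀ → ∃ qs, ktw n m δ μ qs = qs ∧
      Tendsto (fun k => E^[k] q₀) atTop (nhds qs) := by
  set K : ℝ → ℝ := ktw n m δ μ with hK
  -- values lie in the box almost surely
  have h1 : μ (Set.Icc 0 abar) = 1 := by
    have h := hbdd
    rw [MeasureTheory.ae_iff] at h
    have hc : μ (Set.Icc 0 abar)ᶜ = 0 := h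
    rwa [prob_compl_eq_zero_iff measurableSet_Icc] at hc
  have hA : ∀ᵐ v ∂(Measure.pi fun _ : Fin n => μ), ∀ i, v i ∈ Set.Icc 0 abar := by
    have hpi : (Measure.pi fun _ : Fin n => μ)
        (Set.univ.pi fun _ : Fin n => Set.Icc 0 abar) = 1 := by
      rw [Measure.pi_pi]; simp [h1]
    rw [MeasureTheory.ae_iff]
    have hsub : {v : Fin n → ℝ | ¬ ∀ i, v i ∈ Set.Icc 0 abar} ⊆
        (Set.univ.pi fun _ : Fin n => Set.Icc 0 abar)ᶜ := by
      intro v hv hc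
      exact hv fun i => hc i (Set.mem_univ i)
    refine le_antisymm (le_trans (measure_mono hsub) ?_) zero_le
    exact le_of_eq
      ((prob_compl_eq_zero_iff
        (MeasurableSet.univ_pi fun _ => measurableSet_Icc)).mpr hpi)
  -- nonnegativity of the kernel
  have hB : ∀ q, 0 ≤ q → 0 ≤ K q := by
    intro q hq
    apply MeasureTheory.integral_nonneg_of_ae
    filter_upwards [hA] with v hv
    split
    · apply mul_nonneg (by positivity)
      apply Finset.sum_nonneg
      intro i _
      exact le_min (hv i).1 (by positivity)
    · positivity
  -- vanishing of the kernel beyond the support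
  have hC : ∀ q, abar < q → K q = 0 := by
    intro q hq
    have : K q = ∫ _v : Fin n → ℝ, (0 : ℝ) ∂(Measure.pi fun _ : Fin n => μ) := by
      apply MeasureTheory.integral_congr_ae
      filter_upwards [hA] with v hv
      have he : Finset.univ.filter (fun i => q ≤ v i) = ∅ := by
        apply Finset.filter_eq_empty_iff.mpr
        intro i _
        exact not_le.mpr (lt_of_le_of_lt (hv i).2 hq)
      have hd : demandCount n q v = 0 := by simp [demandCount, he]
      simp [hd, he, Nat.lt_of_lt_of_le Nat.zero_lt_one hm]
    rw [this, MeasureTheory.integral_zero]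
  -- boundedness of the kernel
  have hCb : ∀ q, 0 ≤ q → K q ≤ L * (abar + 1) := by
    intro q hq
    by_cases h : abar < q
    · rw [hC q h]; positivity
    · push_neg at h
      have hl := hlip q hq (abar + 1) (Set.mem_Ici.mpr (by linarith))
      rw [hC (abar + 1) (by linarith)] at hl
      have habs : |q - (abar + 1)| = abar + 1 - q := by
        rw [abs_of_nonpos (by linarith)]; ring
      rw [habs] at hl
      have h2 := (abs_le.mp hl).2
      nlinarith [mul_nonneg hL hq]
  -- α facts
  have hLpos : (0 : ℝ) < L + 1 := by linarith
  have hα1' : α * (L + 1) ≤ 1 := by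
    rw [le_div_iff₀ hLpos] at hα1
    exact hα1
  have hαle1 : α ≤ 1 := by nlinarith
  -- continuity of the kernel on [0,∞)
  have hKlip : LipschitzOnWith (Real.toNNReal L) K (Set.Ici 0) := by
    apply LipschitzOnWith.of_dist_le_mul
    intro x hx y hy
    rw [Real.dist_eq, Real.dist_eq, Real.coe_toNNReal L hL]
    exact hlip x hx y hy
  have hKcont : ContinuousOn K (Set.Ici 0) := hKlip.continuousOn
  have hEcont : ContinuousOn E (Set.Ici 0) := by
    have hF : ContinuousOn (fun q => α * K q + (1 - α) * q) (Set.Ici 0) :=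
      (continuousOn_const.mul hKcont).add (continuousOn_const.mul continuousOn_id)
    exact hF.congr fun q _ => hE q
  -- properties of E
  have h0 : ∀ x, 0 ≤ x → 0 ≤ E x := by
    intro x hx
    rw [hE]
    have := hB x hx
    nlinarith
  have hmono : ∀ x y, 0 ≤ x → x ≤ y → E x ≤ E y := by
    intro x y hx hxy
    have hy : 0 ≤ y := le_trans hx hxy
    have hl := hlip x hx y hy
    have habs : |x - y| = y - x := by rw [abs_of_nonpos (by linarith)]; ring
    rw [habs] at hl
    have h2 := (abs_le.mp hl).2
    rw [hE, hE]
    nlinarith [mul_le_mul_of_nonneg_left h2 hα0.le,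
      mul_nonneg (sub_nonneg.mpr hα1') (sub_nonneg.mpr hxy)]
  intro q₀ hq₀
  set M : ℝ := max q₀ (L * (abar + 1)) with hMdef
  have hM : ∀ x, 0 ≤ x → x ≤ M → E x ≤ M := by
    intro x hx hxM
    rw [hE]
    have hb : K x ≤ L * (abar + 1) := hCb x hx
    have hbM : L * (abar + 1) ≤ M := le_max_right _ _
    nlinarith
  obtain ⟨qs, hfix, htend⟩ :=
    iterate_tendsto_fixed E M h0 hM hmono hEcont q₀ hq₀.le (le_max_left _ _)
  refine ⟨qs, ?_, htend⟩
  rw [hE] at hfix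
  have h2 : α * K qs = α * qs := by nlinarith
  exact mul_left_cancel₀ (ne_of_gt hα0) h2
end
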